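/- arXiv:1706.05175 — 6 statements merged into one kernel-verified Lean document; each statement's English description precedes it below -/
import Mathlib

section
/- Let m, n ≥ 1, let u₁,...,uₙ : ℝᵐ → ℂ be continuously differentiable, and set F(p,y) = p^{n+1}/(n+1) + u₁(y)p^{n−1} + u₂(y)p^{n−2} + ⋯ + uₙ(y) for p ∈ ℂ, y ∈ ℝᵐ. Suppose λ : ℝᵐ → ℂ is a continuous function such that ∂_p F(λ(y), y) = 0 for every y (a continuously chosen critical point). Then the critical value r(y) := F(λ(y), y) is a C¹ function of y, and its partial derivatives are given by ∂_{y_j} r(y) = Σ_{i=1}^{n} ∂_{y_j} u_i(y) · λ(y)^{n−i} for every y and every j = 1,...,m. -/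
open Polynomial Asymptotics Filter

lemma antideriv_dvd (k : ℕ) (R : ℂ[X]) (h0 : R.coeff 0 = 0)
    (hd : (X : ℂ[X]) ^ k ∣ derivative R) : (X : ℂ[X]) ^ (k + 1) ∣ R := by
  rw [X_pow_dvd_iff] at hd ⊢
  intro d hdk
  match d with
  | 0 => exact h0
  | (e+1) =>
    have h := hd e (by omega)
    rw [coeff_derivative] at h
    exact (mul_eq_zero.1 h).resolve_right (Nat.cast_add_one_ne_zero e)

lemma crit_hasFDerivAt (m n : ℕ) (hn : 1 ≤ n)
    (u : ℕ → (Fin m → ℝ) → ℂ)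
    (hu : ∀ i ∈ Finset.Icc 1 n, ContDiff ℝ 1 (u i))
    (lam : (Fin m → ℝ) → ℂ) (hlam : Continuous lam)
    (P : (Fin m → ℝ) → ℂ[X])
    (hP : ∀ y, P y = C ((n : ℂ) + 1)⁻¹ * X ^ (n + 1) +
        ∑ i ∈ Finset.Icc 1 n, C (u i y) * X ^ (n - i))
    (hcrit : ∀ y, (derivative (P y)).eval (lam y) = 0)
    (y₀ : Fin m → ℝ) :
    HasFDerivAt (fun y => (P y).eval (lam y))
      (∑ i ∈ Finset.Icc 1 n, (lam y₀) ^ (n - i) • fderiv ℝ (u i) y₀) y₀ := by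
  have hn1 : ((n : ℂ) + 1) ≠ 0 := Nat.cast_add_one_ne_zero n
  have hudiff : ∀ i ∈ Finset.Icc 1 n, DifferentiableAt ℝ (u i) y₀ := fun i hi =>
    ((hu i hi).differentiable one_ne_zero).differentiableAt
  set l0 := lam y₀ with hl0
  set L : (Fin m → ℝ) →L[ℝ] ℂ :=
    ∑ i ∈ Finset.Icc 1 n, l0 ^ (n - i) • fderiv ℝ (u i) y₀ with hL
  have heval : ∀ y p, (P y).eval p =
      ((n : ℂ) + 1)⁻¹ * p ^ (n + 1) + ∑ i ∈ Finset.Icc 1 n, u i y * p ^ (n - i) := by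
    intro y p
    simp [hP, eval_finset_sum]
  have hdiffeval : ∀ y p, (P y).eval p - (P y₀).eval p =
      ∑ i ∈ Finset.Icc 1 n, (u i y - u i y₀) * p ^ (n - i) := by
    intro y p
    have h : ∑ i ∈ Finset.Icc 1 n, (u i y - u i y₀) * p ^ (n - i) =
        ∑ i ∈ Finset.Icc 1 n, u i y * p ^ (n - i)
          - ∑ i ∈ Finset.Icc 1 n, u i y₀ * p ^ (n - i) := by
      rw [← Finset.sum_sub_distrib]
      exact Finset.sum_congr rfl fun i _ => by ring
    rw [heval, heval, h]
    ring
  have key : ∀ y, (P y).eval (lam y) - (P y₀).eval l0 - L (y - y₀) =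
      (∑ i ∈ Finset.Icc 1 n,
        (u i y - u i y₀ - fderiv ℝ (u i) y₀ (y - y₀)) * l0 ^ (n - i))
      + (∑ i ∈ Finset.Icc 1 n,
        (u i y - u i y₀) * ((lam y) ^ (n - i) - l0 ^ (n - i)))
      + ((P y₀).eval (lam y) - (P y₀).eval l0) := by
    intro y
    have h1 : (P y).eval (lam y) =
        (P y₀).eval (lam y) + ∑ i ∈ Finset.Icc 1 n, (u i y - u i y₀) * (lam y) ^ (n - i) := by
      rw [← hdiffeval y (lam y)]; ring
    have hLh : L (y - y₀) =
        ∑ i ∈ Finset.Icc 1 n, l0 ^ (n - i) * fderiv ℝ (u i) y₀ (y - y₀) := by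
      simp [hL, ContinuousLinearMap.sum_apply, smul_eq_mul]
    have hsum : ∑ i ∈ Finset.Icc 1 n, (u i y - u i y₀) * (lam y) ^ (n - i)
        - ∑ i ∈ Finset.Icc 1 n, l0 ^ (n - i) * fderiv ℝ (u i) y₀ (y - y₀)
        = (∑ i ∈ Finset.Icc 1 n,
            (u i y - u i y₀ - fderiv ℝ (u i) y₀ (y - y₀)) * l0 ^ (n - i))
          + ∑ i ∈ Finset.Icc 1 n,
            (u i y - u i y₀) * ((lam y) ^ (n - i) - l0 ^ (n - i)) := by
      rw [← Finset.sum_sub_distrib, ← Finset.sum_add_distrib]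
      exact Finset.sum_congr rfl fun i _ => by ring
    rw [h1, hLh]
    linear_combination hsum
  have hf1 : (fun y => ∑ i ∈ Finset.Icc 1 n,
      (u i y - u i y₀ - fderiv ℝ (u i) y₀ (y - y₀)) * l0 ^ (n - i))
      =o[nhds y₀] fun y => y - y₀ := by
    refine IsLittleO.fun_sum fun i hi => ?_
    have h := ((hudiff i hi).hasFDerivAt).isLittleO
    exact (h.const_mul_left (l0 ^ (n - i))).congr_left fun y => mul_comm _ _
  have hf2 : (fun y => ∑ i ∈ Finset.Icc 1 n,
      (u i y - u i y₀) * ((lam y) ^ (n - i) - l0 ^ (n - i)))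
      =o[nhds y₀] fun y => y - y₀ := by
    refine IsLittleO.fun_sum fun i hi => ?_
    have hO : (fun y => u i y - u i y₀) =O[nhds y₀] fun y => ‖y - y₀‖ :=
      isBigO_norm_right.2 (hudiff i hi).isBigO_sub
    have ho : (fun y => (lam y) ^ (n - i) - l0 ^ (n - i)) =o[nhds y₀] (fun _ => (1 : ℝ)) := by
      rw [isLittleO_one_iff]
      have hc : Continuous fun y => (lam y) ^ (n - i) - l0 ^ (n - i) := by fun_prop
      have := hc.tendsto y₀
      simpa [hl0] using this
    have hmul := hO.mul_isLittleO ho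
    have hmul' : (fun y => (u i y - u i y₀) * ((lam y) ^ (n - i) - l0 ^ (n - i)))
        =o[nhds y₀] fun y => ‖y - y₀‖ := by
      simpa using hmul
    exact hmul'.trans_isBigO (isBigO_norm_left.2 (isBigO_refl _ _))
  have hf3 : (fun y => (P y₀).eval (lam y) - (P y₀).eval l0)
      =o[nhds y₀] fun y => y - y₀ := by
    set D := derivative (P y₀) with hD
    have hDcoeff : D.coeff n = 1 := by
      have h1 : (P y₀).coeff (n + 1) = ((n : ℂ) + 1)⁻¹ := by
        rw [hP]
        rw [coeff_add, coeff_C_mul, coeff_X_pow, finset_sum_coeff]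
        rw [Finset.sum_eq_zero, if_pos rfl]
        · ring
        · intro i hi
          have hi' := Finset.mem_Icc.1 hi
          rw [coeff_C_mul, coeff_X_pow, if_neg (by omega)]
          ring
      rw [hD, coeff_derivative, h1]
      push_cast
      field_simp
    have hD0 : D ≠ 0 := fun h => by simp [h] at hDcoeff
    set Dq := D.comp (X + C l0) with hDq
    have hDqeval : ∀ z, Dq.eval z = D.eval (z + l0) := by
      intro z; simp [hDq, eval_comp]
    have hDq0 : Dq ≠ 0 := by
      intro h
      apply hD0
      apply Polynomial.funext
      intro x
      have := hDqeval (x - l0)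
      rw [h] at this
      simpa [sub_add_cancel] using this.symm
    have hDqroot : Dq.eval 0 = 0 := by
      rw [hDqeval, zero_add]
      exact hcrit y₀
    set k := Dq.rootMultiplicity 0 with hk
    obtain ⟨S, hSfac, hSnd⟩ := Dq.exists_eq_pow_rootMultiplicity_mul_and_not_dvd hDq0 0
    have hS0 : S.eval 0 ≠ 0 := fun h => hSnd (dvd_iff_isRoot.2 h)
    set Rq := (P y₀).comp (X + C l0) - C ((P y₀).eval l0) with hRq
    have hRqeval : ∀ z, Rq.eval z = (P y₀).eval (z + l0) - (P y₀).eval l0 := by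
      intro z; simp [hRq, eval_comp]
    have hRc0 : Rq.coeff 0 = 0 := by
      rw [coeff_zero_eq_eval_zero, hRqeval, zero_add, sub_self]
    have hRd : derivative Rq = Dq := by
      rw [hRq, hDq, derivative_sub, derivative_C, sub_zero, derivative_comp]
      simp
      rfl
    obtain ⟨T, hT⟩ : (X : ℂ[X]) ^ (k + 1) ∣ Rq := by
      refine antideriv_dvd k Rq hRc0 ?_
      rw [hRd]
      exact ⟨S, by simpa using hSfac⟩
    -- constants
    set c := ‖S.eval 0‖ with hc
    have hcpos : 0 < c := norm_pos_iff.2 hS0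
    set Ct := ‖T.eval 0‖ + 1 with hCt
    have hCtpos : 0 < Ct := by positivity
    have hSev : ∀ᶠ z in nhds (0 : ℂ), c / 2 < ‖S.eval z‖ := by
      have ht : Filter.Tendsto (fun z => ‖S.eval z‖) (nhds 0) (nhds c) :=
        (S.continuous.norm).tendsto 0
      exact ht.eventually_const_lt (by linarith)
    have hTev : ∀ᶠ z in nhds (0 : ℂ), ‖T.eval z‖ < Ct := by
      have ht : Filter.Tendsto (fun z => ‖T.eval z‖) (nhds 0) (nhds ‖T.eval 0‖) :=
        (T.continuous.norm).tendsto 0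
      exact ht.eventually_lt_const (by linarith)
    obtain ⟨ε₀, hε₀pos, hε₀⟩ := Metric.eventually_nhds_iff.1 (hSev.and hTev)
    -- the O(h) bound on D.eval (lam y)
    have hder_eval : ∀ y' p, (derivative (P y')).eval p =
        p ^ n + ∑ i ∈ Finset.Icc 1 n, u i y' * (((n - i : ℕ) : ℂ) * p ^ (n - i - 1)) := by
      intro y' p
      rw [hP, derivative_add, derivative_C_mul, derivative_X_pow, derivative_sum]
      simp only [derivative_C_mul, derivative_X_pow]
      rw [eval_add, eval_mul, eval_C, eval_mul, eval_C, eval_pow, eval_X, eval_finset_sum]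
      simp only [eval_mul, eval_C, eval_pow, eval_X, Nat.add_sub_cancel]
      push_cast
      rw [show ((n : ℂ) + 1)⁻¹ * (((n : ℂ) + 1) * p ^ n) = p ^ n by field_simp]
    have hdd : ∀ y, D.eval (lam y) = ∑ i ∈ Finset.Icc 1 n,
        (u i y₀ - u i y) * (((n - i : ℕ) : ℂ) * (lam y) ^ (n - i - 1)) := by
      intro y
      have h0 := hcrit y
      rw [hder_eval] at h0
      have hsum : ∑ i ∈ Finset.Icc 1 n,
          (u i y₀ - u i y) * (((n - i : ℕ) : ℂ) * (lam y) ^ (n - i - 1)) =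
          ∑ i ∈ Finset.Icc 1 n, u i y₀ * (((n - i : ℕ) : ℂ) * (lam y) ^ (n - i - 1))
          - ∑ i ∈ Finset.Icc 1 n, u i y * (((n - i : ℕ) : ℂ) * (lam y) ^ (n - i - 1)) := by
        rw [← Finset.sum_sub_distrib]
        exact Finset.sum_congr rfl fun i _ => by ring
      rw [hD, hder_eval, hsum]
      linear_combination h0
    have hDev : (fun y => D.eval (lam y)) =O[nhds y₀] fun y => ‖y - y₀‖ := by
      have : (fun y => ∑ i ∈ Finset.Icc 1 n,
          (u i y₀ - u i y) * (((n - i : ℕ) : ℂ) * (lam y) ^ (n - i - 1)))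
          =O[nhds y₀] fun y => ‖y - y₀‖ := by
        refine IsBigO.fun_sum fun i hi => ?_
        have hO1 : (fun y => u i y₀ - u i y) =O[nhds y₀] fun y => ‖y - y₀‖ :=
          ((isBigO_norm_right.2 (hudiff i hi).isBigO_sub).neg_left).congr_left
            fun y => neg_sub _ _
        have hO2 : (fun y => ((n - i : ℕ) : ℂ) * (lam y) ^ (n - i - 1))
            =O[nhds y₀] (fun _ => (1 : ℝ)) := by
          have hc : Continuous fun y => ((n - i : ℕ) : ℂ) * (lam y) ^ (n - i - 1) := by
            fun_prop
          exact (hc.tendsto y₀).isBigO_one ℝ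
        simpa using hO1.mul hO2
      exact this.congr_left fun y => (hdd y).symm
    -- conclude
    rw [isLittleO_iff]
    intro ε hε
    obtain ⟨C₁, hC₁⟩ := hDev.isBigOWith
    rw [Asymptotics.isBigOWith_iff] at hC₁
    set C₂ := max C₁ 1 with hC₂
    have hC₂1 : 1 ≤ C₂ := le_max_right _ _
    have hC₂pos : 0 < C₂ := by linarith
    have hC₂' : ∀ᶠ y in nhds y₀, ‖D.eval (lam y)‖ ≤ C₂ * ‖y - y₀‖ := by
      filter_upwards [hC₁] with y hy
      calc ‖D.eval (lam y)‖ ≤ C₁ * ‖‖y - y₀‖‖ := hy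
        _ ≤ C₂ * ‖y - y₀‖ := by
            rw [norm_norm]
            exact mul_le_mul_of_nonneg_right (le_max_left _ _) (norm_nonneg _)
    set δ := min ε₀ (ε * (c / 2) / (Ct * C₂)) with hδ
    have hδpos : 0 < δ := lt_min hε₀pos (by positivity)
    have hnear : ∀ᶠ y in nhds y₀, dist (lam y) l0 < δ :=
      (Metric.tendsto_nhds.1 (hlam.tendsto y₀)) δ hδpos
    filter_upwards [hC₂', hnear] with y hy1 hy2
    set q := lam y - l0 with hq
    have hq0 : lam y = q + l0 := by rw [hq]; ring
    have hqn : ‖q‖ < δ := by rw [hq, ← dist_eq_norm]; exact hy2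
    have hqε₀ : dist q 0 < ε₀ := by
      rw [dist_zero_right]; exact lt_of_lt_of_le hqn (min_le_left _ _)
    obtain ⟨hSq, hTq⟩ := hε₀ hqε₀
    -- key estimates
    have e1 : (P y₀).eval (lam y) - (P y₀).eval l0 = Rq.eval q := by
      rw [hRqeval, hq0]
    have e2 : ‖Rq.eval q‖ ≤ ‖q‖ ^ k * ‖q‖ * Ct := by
      rw [hT, eval_mul, eval_pow, eval_X, norm_mul, norm_pow, pow_succ]
      exact mul_le_mul_of_nonneg_left (le_of_lt hTq) (by positivity)
    have e3 : ‖q‖ ^ k * (c / 2) ≤ C₂ * ‖y - y₀‖ := by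
      have h1 : ‖q‖ ^ k * (c / 2) ≤ ‖q‖ ^ k * ‖S.eval q‖ :=
        mul_le_mul_of_nonneg_left (le_of_lt hSq) (by positivity)
      have h2 : ‖q‖ ^ k * ‖S.eval q‖ = ‖Dq.eval q‖ := by
        rw [hSfac, eval_mul, eval_pow, norm_mul, norm_pow]
        simp
        exact Or.inl rfl
      have h3 : ‖Dq.eval q‖ = ‖D.eval (lam y)‖ := by rw [hDqeval, ← hq0]
      calc ‖q‖ ^ k * (c / 2) ≤ ‖q‖ ^ k * ‖S.eval q‖ := h1
        _ = ‖D.eval (lam y)‖ := by rw [h2, h3]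
        _ ≤ C₂ * ‖y - y₀‖ := hy1
    have hqδ' : ‖q‖ ≤ ε * (c / 2) / (Ct * C₂) := le_of_lt (lt_of_lt_of_le hqn (min_le_right _ _))
    -- combine
    rw [e1]
    have hqk : ‖q‖ ^ k ≤ C₂ * ‖y - y₀‖ / (c / 2) := by
      rw [le_div_iff₀ (by positivity)]
      exact e3
    calc ‖Rq.eval q‖ ≤ ‖q‖ ^ k * ‖q‖ * Ct := e2
      _ ≤ (C₂ * ‖y - y₀‖ / (c / 2)) * (ε * (c / 2) / (Ct * C₂)) * Ct := by
          apply mul_le_mul_of_nonneg_right _ (le_of_lt hCtpos)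
          exact mul_le_mul hqk hqδ' (norm_nonneg _) (by positivity)
      _ = ε * ‖y - y₀‖ := by field_simp
  have := (hf1.add hf2).add hf3
  exact HasFDerivAt.of_isLittleO (this.congr_left fun y => (key y).symm)



/-- For a family of polynomials
`F(p,y) = p^{n+1}/(n+1) + u₁(y)p^{n−1} + ⋯ + uₙ(y)` with `C¹` coefficients on `ℝᵐ`,
and a continuously chosen critical point `λ(y)` (i.e. `∂ₚF(λ(y),y) = 0`), the
critical value `r(y) = F(λ(y),y)` is `C¹` and
`∂_{yⱼ} r(y) = Σᵢ ∂_{yⱼ} uᵢ(y)·λ(y)^{n−i}`. -/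
theorem statement1
    (m n : ℕ) (hm : 1 ≤ m) (hn : 1 ≤ n)
    (u : ℕ → (Fin m → ℝ) → ℂ)
    (hu : ∀ i ∈ Finset.Icc 1 n, ContDiff ℝ 1 (u i))
    (lam : (Fin m → ℝ) → ℂ) (hlam : Continuous lam)
    (F : ℂ → (Fin m → ℝ) → ℂ)
    (hF : ∀ (p : ℂ) (y : Fin m → ℝ),
        F p y = p ^ (n + 1) / ((n : ℂ) + 1) + ∑ i ∈ Finset.Icc 1 n, u i y * p ^ (n - i))
    (hcrit : ∀ y : Fin m → ℝ, deriv (fun p : ℂ => F p y) (lam y) = 0) :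
    ContDiff ℝ 1 (fun y => F (lam y) y) ∧
    ∀ (y : Fin m → ℝ) (j : Fin m),
      fderiv ℝ (fun y => F (lam y) y) y (Pi.single j 1) =
        ∑ i ∈ Finset.Icc 1 n, fderiv ℝ (u i) y (Pi.single j 1) * (lam y) ^ (n - i) := by
  set P : (Fin m → ℝ) → ℂ[X] := fun y =>
    Polynomial.C ((n : ℂ) + 1)⁻¹ * Polynomial.X ^ (n + 1) +
      ∑ i ∈ Finset.Icc 1 n, Polynomial.C (u i y) * Polynomial.X ^ (n - i) with hP
  have hPeval : ∀ y p, (P y).eval p = F p y := by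
    intro y p
    rw [hF]
    simp [hP, Polynomial.eval_finset_sum, div_eq_mul_inv]
    ring
  have hFfun : ∀ y, (fun p : ℂ => F p y) = fun p => (P y).eval p := by
    intro y; funext p; exact (hPeval y p).symm
  have hcrit' : ∀ y, ((P y).derivative).eval (lam y) = 0 := by
    intro y
    rw [← Polynomial.deriv, ← hFfun y]
    exact hcrit y
  have hr : (fun y => F (lam y) y) = fun y => (P y).eval (lam y) := by
    funext y; exact (hPeval y (lam y)).symm
  have hder : ∀ y₀, HasFDerivAt (fun y => F (lam y) y)
      (∑ i ∈ Finset.Icc 1 n, (lam y₀) ^ (n - i) • fderiv ℝ (u i) y₀) y₀ := by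
    intro y₀
    rw [hr]
    exact crit_hasFDerivAt m n hn u hu lam hlam P (fun y => rfl) hcrit' y₀
  have hfd : ∀ y₀, fderiv ℝ (fun y => F (lam y) y) y₀ =
      ∑ i ∈ Finset.Icc 1 n, (lam y₀) ^ (n - i) • fderiv ℝ (u i) y₀ :=
    fun y₀ => (hder y₀).fderiv
  constructor
  · rw [contDiff_one_iff_fderiv]
    refine ⟨fun y₀ => (hder y₀).differentiableAt, ?_⟩
    have : Continuous fun y₀ => (∑ i ∈ Finset.Icc 1 n,
        (lam y₀) ^ (n - i) • fderiv ℝ (u i) y₀ : (Fin m → ℝ) →L[ℝ] ℂ) := by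
      refine continuous_finset_sum _ fun i hi => ?_
      exact (hlam.pow _).smul ((hu i hi).continuous_fderiv one_ne_zero)
    exact this.congr fun y₀ => (hfd y₀).symm
  · intro y j
    rw [hfd y]
    rw [ContinuousLinearMap.sum_apply]
    exact Finset.sum_congr rfl fun i _ => by
      rw [ContinuousLinearMap.smul_apply, smul_eq_mul, mul_comm]
end

section
/- Let n = 2l+1 be odd, and let U = (u₁,...,uₙ) : ℝ² → ℝⁿ be a C², doubly periodic solution of the dispersionless Lax reduction of the Benney chain, and set F(p,t,x) = p^{n+1}/(n+1) + u₁(t,x)p^{n−1} + ⋯ + uₙ(t,x). Suppose there exist continuous functions μ : ℝ² → ℝ and λ₁,...,λ_l : ℝ² → ℂ with Im λⱼ ≠ 0 everywhere that continuously factorize the characteristic polynomial: pⁿ + (n−1)u₁p^{n−2} + ⋯ + u_{n−1} = (p − μ)·∏_{j=1}^{l}(p − λⱼ)(p − conj(λⱼ)) for all (t,x). Then the functions ρ(t,x) := F(μ(t,x),t,x) and rⱼ(t,x) := F(λⱼ(t,x),t,x) (j = 1,...,l) are C¹ on ℝ² and satisfy the transport equations ∂_t ρ + μ(t,x)·∂_x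 ρ = 0 and ∂_t rⱼ + λⱼ(t,x)·∂_x rⱼ = 0 (the latter an identity of ℂ-valued functions). -/
/-- Partial derivative in the first variable `t` of a function on `ℝ × ℝ`. -/
noncomputable def pt {E : Type*} [NormedAddCommGroup E] [NormedSpace ℝ E]
    (f : ℝ × ℝ → E) (q : ℝ × ℝ) : E := fderiv ℝ f q (1, 0)

/-- Partial derivative in the second variable `x` of a function on `ℝ × ℝ`. -/
noncomputable def px {E : Type*} [NormedAddCommGroup E] [NormedSpace ℝ E]
    (f : ℝ × ℝ → E) (q : ℝ × ℝ) : E := fderiv ℝ f q (0, 1)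

/-- `u 1, …, u n` (with the convention `u 0 = 0`) solve the dispersionless Lax
reduction of the Benney moments chain. -/
def IsBenney (n : ℕ) (u : ℕ → ℝ × ℝ → ℝ) : Prop :=
  (∀ q, u 0 q = 0) ∧
  (∀ i ∈ Finset.Icc 1 (n - 1), ∀ q,
      pt (u i) q + px (u (i + 1)) q = ((n : ℝ) - i + 1) * u (i - 1) q * px (u 1) q) ∧
  (∀ q, pt (u n) q = u (n - 1) q * px (u 1) q)

open Finset Filter Asymptotics

noncomputable def Fc (n : ℕ) (u : ℕ → ℝ × ℝ → ℝ) (p : ℂ) (q : ℝ × ℝ) : ℂ :=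
  p ^ (n + 1) / ((n : ℂ) + 1) + ∑ i ∈ Finset.Icc 1 n, ((u i q : ℝ) : ℂ) * p ^ (n - i)

noncomputable def Gc (n : ℕ) (u : ℕ → ℝ × ℝ → ℝ) (p : ℂ) (q : ℝ × ℝ) : ℂ :=
  p ^ n + ∑ i ∈ Finset.Icc 1 (n - 1),
      ((((n : ℝ) - i) * u i q : ℝ) : ℂ) * p ^ (n - 1 - i)

noncomputable def Dc (n : ℕ) (u : ℕ → ℝ × ℝ → ℝ) (p : ℂ) (q : ℝ × ℝ) :
    (ℝ × ℝ) →L[ℝ] ℂ :=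
  ∑ i ∈ Finset.Icc 1 n, p ^ (n - i) • (Complex.ofRealCLM.comp (fderiv ℝ (u i) q))

lemma Fc_hasDerivAt (n : ℕ) (hn : 1 ≤ n) (u : ℕ → ℝ × ℝ → ℝ) (q : ℝ × ℝ) (p : ℂ) :
    HasDerivAt (fun p => Fc n u p q) (Gc n u p q) p := by
  have hne : ((n : ℂ) + 1) ≠ 0 := Nat.cast_add_one_ne_zero n
  have h1 : HasDerivAt (fun p : ℂ => p ^ (n + 1) / ((n : ℂ) + 1)) (p ^ n) p := by
    have h := (hasDerivAt_pow (n + 1) p).div_const ((n : ℂ) + 1)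
    refine h.congr_deriv ?_
    push_cast
    field_simp
  have h2 : ∀ i ∈ Finset.Icc 1 n,
      HasDerivAt (fun p : ℂ => ((u i q : ℝ) : ℂ) * p ^ (n - i))
        (((u i q : ℝ) : ℂ) * (((n - i : ℕ) : ℂ) * p ^ (n - i - 1))) p :=
    fun i _ => (hasDerivAt_pow (n - i) p).const_mul _
  have h3 := HasDerivAt.fun_sum h2
  have h4 := h1.add h3
  refine h4.congr_deriv ?_
  unfold Gc
  congr 1
  have hsplit : Finset.Icc 1 n = insert n (Finset.Icc 1 (n - 1)) := by
    ext k; simp only [Finset.mem_Icc, Finset.mem_insert]; omega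
  rw [hsplit, Finset.sum_insert (by simp only [Finset.mem_Icc]; omega)]
  rw [Nat.sub_self]
  simp only [Nat.cast_zero, zero_mul, mul_zero, zero_add]
  refine Finset.sum_congr rfl fun i hi => ?_
  simp only [Finset.mem_Icc] at hi
  rw [show n - i - 1 = n - 1 - i from by omega]
  push_cast [Nat.cast_sub (by omega : i ≤ n)]
  ring

lemma Fc_hasFDerivAt_q (n : ℕ) (u : ℕ → ℝ × ℝ → ℝ)
    (hu : ∀ i ∈ Finset.Icc 1 n, ContDiff ℝ 2 (u i)) (p : ℂ) (q₀ : ℝ × ℝ) :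
    HasFDerivAt (fun q => Fc n u p q) (Dc n u p q₀) q₀ := by
  have h2 : ∀ i ∈ Finset.Icc 1 n,
      HasFDerivAt (fun q => ((u i q : ℝ) : ℂ) * p ^ (n - i))
        (p ^ (n - i) • (Complex.ofRealCLM.comp (fderiv ℝ (u i) q₀))) q₀ := by
    intro i hi
    have hui : HasFDerivAt (u i) (fderiv ℝ (u i) q₀) q₀ :=
      (((hu i hi).differentiable (by norm_num)) q₀).hasFDerivAt
    have h := (Complex.ofRealCLM.hasFDerivAt.comp q₀ hui).mul_const (p ^ (n - i))
    exact h
  have h3 := HasFDerivAt.fun_sum h2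
  have h4 := (hasFDerivAt_const (p ^ (n + 1) / ((n : ℂ) + 1)) q₀).add h3
  refine h4.congr_fderiv ?_
  rw [zero_add]
  rfl

lemma Dc_cont (n : ℕ) (u : ℕ → ℝ × ℝ → ℝ)
    (hu : ∀ i ∈ Finset.Icc 1 n, ContDiff ℝ 2 (u i))
    (lam : ℝ × ℝ → ℂ) (hlam : Continuous lam) :
    Continuous (fun q => Dc n u (lam q) q) := by
  unfold Dc
  refine continuous_finset_sum _ fun i hi => ?_
  have h1 : Continuous fun q => (lam q) ^ (n - i) := hlam.pow _
  have h2 : Continuous fun q => Complex.ofRealCLM.comp (fderiv ℝ (u i) q) := by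
    have := (hu i hi).continuous_fderiv (by norm_num)
    exact ((ContinuousLinearMap.compL ℝ (ℝ × ℝ) ℝ ℂ Complex.ofRealCLM).continuous).comp this
  exact h1.smul h2

lemma Dc_apply (n : ℕ) (u : ℕ → ℝ × ℝ → ℝ) (p : ℂ) (q : ℝ × ℝ) (v : ℝ × ℝ) :
    Dc n u p q v = ∑ i ∈ Finset.Icc 1 n, p ^ (n - i) * ((fderiv ℝ (u i) q v : ℝ) : ℂ) := by
  simp [Dc, smul_eq_mul]

lemma critval_hasFDerivAt
    (n : ℕ) (hn : 1 ≤ n) (u : ℕ → ℝ × ℝ → ℝ)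
    (hu : ∀ i ∈ Finset.Icc 1 n, ContDiff ℝ 2 (u i))
    {ι : Type} [Fintype ι] (z : ι → ℝ × ℝ → ℂ) (hz : ∀ k, Continuous (z k))
    (hfact : ∀ q p, Gc n u p q = ∏ k, (p - z k q))
    (lam : ℝ × ℝ → ℂ) (hlam : Continuous lam)
    (hroot : ∀ q, Gc n u (lam q) q = 0)
    (q₀ : ℝ × ℝ) (hne : ∃ k, z k q₀ ≠ lam q₀) :
    HasFDerivAt (fun q => Fc n u (lam q) q) (Dc n u (lam q₀) q₀) q₀ := by
  classical
  have hι : Nonempty ι := ⟨hne.choose⟩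
  have h1 : HasFDerivAt (fun q => Fc n u (lam q₀) q) (Dc n u (lam q₀) q₀) q₀ :=
    Fc_hasFDerivAt_q n u hu _ q₀
  have key : (fun q => Fc n u (lam q) q - Fc n u (lam q₀) q) =o[nhds q₀] (fun q => q - q₀) := by
    rw [Asymptotics.isLittleO_iff]
    intro c hc
    set p₀ := lam q₀ with hp₀def
    set S : Finset ι := Finset.univ.filter (fun k => z k q₀ = p₀) with hSdef
    have hSmem : ∀ k, k ∈ S ↔ z k q₀ = p₀ := by
      intro k; simp [hSdef]
    have hScmem : ∀ k, k ∈ Sᶜ ↔ z k q₀ ≠ p₀ := by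
      intro k; simp [hSdef]
    have hSne : S.Nonempty := by
      have h0 := hroot q₀
      rw [hfact q₀ p₀] at h0
      obtain ⟨k, -, hk⟩ := Finset.prod_eq_zero_iff.1 h0
      exact ⟨k, (hSmem k).2 (sub_eq_zero.1 hk).symm⟩
    set m := S.card with hmdef
    have hTne : Sᶜ.Nonempty := by
      obtain ⟨k, hk⟩ := hne
      exact ⟨k, (hScmem k).2 hk⟩
    set tc := Sᶜ.card with htcdef
    set d : ℝ := Sᶜ.inf' hTne (fun k => ‖p₀ - z k q₀‖) with hddef
    have hd0 : 0 < d := by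
      rw [hddef, Finset.lt_inf'_iff]
      intro k hk
      have hne' : p₀ - z k q₀ ≠ 0 := sub_ne_zero.2 fun h => (hScmem k).1 hk h.symm
      simpa [norm_pos_iff] using hne'
    have hd_le : ∀ k ∈ Sᶜ, d ≤ ‖p₀ - z k q₀‖ := fun k hk => Finset.inf'_le _ hk
    set M : ℝ := 1 + ‖p₀‖ + Finset.univ.sup' Finset.univ_nonempty (fun k => ‖z k q₀‖)
      with hMdef
    have hsup0 : (0:ℝ) ≤ Finset.univ.sup' Finset.univ_nonempty (fun k => ‖z k q₀‖) := by
      obtain ⟨k⟩ := hι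
      exact le_trans (norm_nonneg (z k q₀))
        (Finset.le_sup' (fun k => ‖z k q₀‖) (Finset.mem_univ k))
    have hM1 : 1 ≤ M := by
      rw [hMdef]; have := norm_nonneg p₀; linarith
    have hMp : ‖p₀‖ + 1 ≤ M := by rw [hMdef]; linarith
    have hMz : ∀ k, ‖z k q₀‖ + 1 ≤ M := by
      intro k
      have h := Finset.le_sup' (fun k => ‖z k q₀‖) (Finset.mem_univ k)
      have := norm_nonneg p₀
      rw [hMdef]; linarith
    -- Lipschitz-type bound for Gc in the parameter q
    obtain ⟨L, hL0, hLev⟩ : ∃ L : ℝ, 0 < L ∧ ∀ᶠ q in nhds q₀, ∀ w : ℂ, ‖w‖ ≤ M →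
        ‖Gc n u w q₀ - Gc n u w q‖ ≤ L * ‖q - q₀‖ := by
      have hcoef : ∀ i : ℕ, ∃ K : ℝ, 0 ≤ K ∧ (i ∈ Finset.Icc 1 n →
          ∀ᶠ q in nhds q₀, |u i q₀ - u i q| ≤ K * ‖q - q₀‖) := by
        intro i
        by_cases hi : i ∈ Finset.Icc 1 n
        · have hdiff : DifferentiableAt ℝ (u i) q₀ :=
            ((hu i hi).differentiable (by norm_num)).differentiableAt
          have hO := hdiff.isBigO_sub
          rw [Asymptotics.isBigO_iff] at hO
          obtain ⟨K, hK⟩ := hO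
          refine ⟨|K|, abs_nonneg K, fun _ => ?_⟩
          filter_upwards [hK] with q hq
          rw [abs_sub_comm]
          calc |u i q - u i q₀| = ‖u i q - u i q₀‖ := (Real.norm_eq_abs _).symm
            _ ≤ K * ‖q - q₀‖ := by simpa using hq
            _ ≤ |K| * ‖q - q₀‖ :=
                mul_le_mul_of_nonneg_right (le_abs_self K) (norm_nonneg _)
        · exact ⟨0, le_rfl, fun h => absurd h hi⟩
      choose K hK0 hKev using hcoef
      refine ⟨(∑ i ∈ Finset.Icc 1 (n-1), ((n:ℝ) * K i)) * M ^ (n-1) + 1, ?_, ?_⟩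
      · have h1' : (0:ℝ) ≤ (∑ i ∈ Finset.Icc 1 (n-1), ((n:ℝ) * K i)) * M ^ (n-1) := by
          apply mul_nonneg
          · exact Finset.sum_nonneg fun i _ => mul_nonneg (Nat.cast_nonneg n) (hK0 i)
          · exact pow_nonneg (by linarith) _
        linarith
      · have hall : ∀ᶠ q in nhds q₀, ∀ i ∈ Finset.Icc 1 (n-1),
            |u i q₀ - u i q| ≤ K i * ‖q - q₀‖ := by
          rw [Filter.eventually_all_finset]
          intro i hi
          simp only [Finset.mem_Icc] at hi
          exact hKev i (by simp only [Finset.mem_Icc]; omega)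
        filter_upwards [hall] with q hq w hw
        have e : Gc n u w q₀ - Gc n u w q = ∑ i ∈ Finset.Icc 1 (n-1),
            ((((n:ℝ) - i) * u i q₀ - ((n:ℝ) - i) * u i q : ℝ) : ℂ) * w ^ (n-1-i) := by
          unfold Gc
          rw [add_sub_add_left_eq_sub, ← Finset.sum_sub_distrib]
          refine Finset.sum_congr rfl fun i hi => ?_
          push_cast
          ring
        rw [e]
        refine (norm_sum_le _ _).trans ?_
        have hterm : ∀ i ∈ Finset.Icc 1 (n-1),
            ‖((((n:ℝ) - i) * u i q₀ - ((n:ℝ) - i) * u i q : ℝ) : ℂ) * w ^ (n-1-i)‖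
              ≤ ((n:ℝ) * K i) * M ^ (n-1) * ‖q - q₀‖ := by
          intro i hi
          simp only [Finset.mem_Icc] at hi
          rw [norm_mul, norm_pow, Complex.norm_real]
          have h1' : ‖((n:ℝ) - i) * u i q₀ - ((n:ℝ) - i) * u i q‖
              = |(n:ℝ) - i| * |u i q₀ - u i q| := by
            rw [Real.norm_eq_abs, show ((n:ℝ) - i) * u i q₀ - ((n:ℝ) - i) * u i q
              = ((n:ℝ) - i) * (u i q₀ - u i q) from by ring, abs_mul]
          rw [h1']
          have h2' : |(n:ℝ) - i| ≤ (n:ℝ) := by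
            rw [abs_of_nonneg (by
              have : (i:ℝ) ≤ (n:ℝ) := by exact_mod_cast Nat.le_of_lt_succ (by omega)
              linarith)]
            have : (0:ℝ) ≤ (i:ℝ) := Nat.cast_nonneg i
            linarith
          have h3' : |u i q₀ - u i q| ≤ K i * ‖q - q₀‖ := hq i (by
            simp only [Finset.mem_Icc]; omega)
          have h4' : ‖w‖ ^ (n-1-i) ≤ M ^ (n-1) := by
            calc ‖w‖ ^ (n-1-i) ≤ M ^ (n-1-i) :=
                  pow_le_pow_left₀ (norm_nonneg w) hw _
              _ ≤ M ^ (n-1) := pow_le_pow_right₀ hM1 (by omega)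
          calc |(n:ℝ) - i| * |u i q₀ - u i q| * ‖w‖ ^ (n-1-i)
              ≤ (n:ℝ) * (K i * ‖q - q₀‖) * M ^ (n-1) := by
                apply mul_le_mul
                · exact mul_le_mul h2' h3' (abs_nonneg _) (Nat.cast_nonneg n)
                · exact h4'
                · positivity
                · exact mul_nonneg (Nat.cast_nonneg n)
                    (mul_nonneg (hK0 i) (norm_nonneg _))
            _ = ((n:ℝ) * K i) * M ^ (n-1) * ‖q - q₀‖ := by ring
        refine (Finset.sum_le_sum hterm).trans ?_
        rw [← Finset.sum_mul, ← Finset.sum_mul]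
        have : (0:ℝ) ≤ ‖q - q₀‖ := norm_nonneg _
        nlinarith [Finset.sum_nonneg (fun i (_ : i ∈ Finset.Icc 1 (n-1)) =>
          mul_nonneg (Nat.cast_nonneg n) (hK0 i))]
    -- main constants
    set C₅ : ℝ := 2^(m+1) * L * (2*M)^tc / ((d/2)^tc) with hC₅def
    have hM0 : (0:ℝ) < M := lt_of_lt_of_le one_pos hM1
    have hC₅0 : 0 < C₅ := by
      rw [hC₅def]
      exact div_pos (mul_pos (mul_pos (pow_pos two_pos _) hL0)
        (pow_pos (by linarith) _)) (pow_pos (by linarith) _)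
    set η : ℝ := min (min (d/3) 1) (c / C₅) with hηdef
    have hη0 : 0 < η := by
      rw [hηdef]
      refine lt_min (lt_min (by linarith) one_pos) (div_pos hc hC₅0)
    have hηd : η ≤ d/3 := le_trans (min_le_left _ _) (min_le_left _ _)
    have hη1 : η ≤ 1 := le_trans (min_le_left _ _) (min_le_right _ _)
    have hηc : η ≤ c / C₅ := min_le_right _ _
    -- eventual smallness
    have hzev : ∀ᶠ q in nhds q₀, ∀ k : ι, ‖z k q - z k q₀‖ < η := by
      rw [Filter.eventually_all]
      intro k
      have h0 : Filter.Tendsto (fun q => z k q - z k q₀) (nhds q₀)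
          (nhds (z k q₀ - z k q₀)) := ((hz k).tendsto q₀).sub tendsto_const_nhds
      rw [sub_self] at h0
      have ht := h0.norm
      rw [norm_zero] at ht
      exact ht.eventually_lt_const hη0
    have hlamev : ∀ᶠ q in nhds q₀, ‖lam q - p₀‖ < η := by
      have h0 : Filter.Tendsto (fun q => lam q - p₀) (nhds q₀)
          (nhds (lam q₀ - p₀)) := (hlam.tendsto q₀).sub tendsto_const_nhds
      rw [hp₀def, sub_self] at h0
      have ht := h0.norm
      rw [norm_zero] at ht
      exact ht.eventually_lt_const hη0
    filter_upwards [hzev, hlamev, hLev] with q hEz hElam hE3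
    -- per-root quantitative bound
    have hqsub : ∀ w : ℂ, Gc n u w q = 0 → ‖w - p₀‖ ≤ η →
        ‖w - p₀‖^m * (d/2)^tc ≤ L * ‖q - q₀‖ := by
      intro w hw hwp
      have hwM : ‖w‖ ≤ M := by
        calc ‖w‖ = ‖p₀ + (w - p₀)‖ := by ring_nf
          _ ≤ ‖p₀‖ + ‖w - p₀‖ := norm_add_le _ _
          _ ≤ ‖p₀‖ + 1 := by linarith
          _ ≤ M := hMp
      have h0 : ‖Gc n u w q₀‖ ≤ L * ‖q - q₀‖ := by
        have h := hE3 w hwM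
        rwa [hw, sub_zero] at h
      have hfac : ‖Gc n u w q₀‖ = ∏ k, ‖w - z k q₀‖ := by
        rw [hfact q₀ w, norm_prod]
      have hSprod : ∏ k ∈ S, ‖w - z k q₀‖ = ‖w - p₀‖^m := by
        rw [Finset.prod_congr rfl (fun k hk => by rw [(hSmem k).1 hk]),
          Finset.prod_const, hmdef]
      have hTprod : (d/2)^tc ≤ ∏ k ∈ Sᶜ, ‖w - z k q₀‖ := by
        rw [htcdef, ← Finset.prod_const]
        refine Finset.prod_le_prod (fun k _ => by linarith) (fun k hk => ?_)
        have h1' := hd_le k hk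
        have h2' : ‖p₀ - z k q₀‖ ≤ ‖p₀ - w‖ + ‖w - z k q₀‖ := by
          calc ‖p₀ - z k q₀‖ = ‖(p₀ - w) + (w - z k q₀)‖ := by ring_nf
            _ ≤ ‖p₀ - w‖ + ‖w - z k q₀‖ := norm_add_le _ _
        have h3' : ‖p₀ - w‖ ≤ d/3 := by
          rw [norm_sub_rev]; linarith
        linarith
      have hlow : ‖w - p₀‖^m * (d/2)^tc ≤ ∏ k, ‖w - z k q₀‖ := by
        rw [← Finset.prod_mul_prod_compl S (fun k => ‖w - z k q₀‖), hSprod]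
        exact mul_le_mul_of_nonneg_left hTprod (pow_nonneg (norm_nonneg _) m)
      calc ‖w - p₀‖^m * (d/2)^tc ≤ ∏ k, ‖w - z k q₀‖ := hlow
        _ = ‖Gc n u w q₀‖ := hfac.symm
        _ ≤ L * ‖q - q₀‖ := h0
    set δ := ‖lam q - p₀‖ with hδdef
    have hδm : δ^m * (d/2)^tc ≤ L * ‖q - q₀‖ :=
      hqsub (lam q) (hroot q) (le_of_lt hElam)
    set E := S.sup' hSne (fun k => ‖z k q - p₀‖) with hEdef
    have hE0 : 0 ≤ E := by
      obtain ⟨k, hk⟩ := hSne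
      exact le_trans (norm_nonneg (z k q - p₀)) (Finset.le_sup' (fun k => ‖z k q - p₀‖) hk)
    have hEm : E^m * (d/2)^tc ≤ L * ‖q - q₀‖ := by
      obtain ⟨k, hk, hEk⟩ := Finset.exists_mem_eq_sup' hSne (fun k => ‖z k q - p₀‖)
      rw [hEdef, hEk]
      refine hqsub (z k q) ?_ ?_
      · rw [hfact q (z k q)]
        exact Finset.prod_eq_zero (Finset.mem_univ k) (by simp)
      · rw [← (hSmem k).1 hk]
        exact le_of_lt (hEz k)
    -- bound for Gc on the segment
    have hseg : ∀ s ∈ segment ℝ p₀ (lam q), ‖Gc n u s q‖ ≤ C₅ * ‖q - q₀‖ := by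
      intro s hs
      have hsp : ‖s - p₀‖ ≤ δ := by
        have hsub : segment ℝ p₀ (lam q) ⊆ Metric.closedBall p₀ δ :=
          (convex_closedBall p₀ δ).segment_subset
            (Metric.mem_closedBall_self (norm_nonneg _))
            (by rw [Metric.mem_closedBall, dist_eq_norm])
        have := hsub hs
        rwa [Metric.mem_closedBall, dist_eq_norm] at this
      have hfacq : ‖Gc n u s q‖ = ∏ k, ‖s - z k q‖ := by
        rw [hfact q s, norm_prod]
      have hδη : δ ≤ η := le_of_lt hElam
      have hprodS : ∏ k ∈ S, ‖s - z k q‖ ≤ (δ + E)^m := by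
        rw [hmdef, ← Finset.prod_const]
        refine Finset.prod_le_prod (fun _ _ => norm_nonneg _) (fun k hk => ?_)
        have hEk : ‖z k q - p₀‖ ≤ E := Finset.le_sup' (fun k => ‖z k q - p₀‖) hk
        calc ‖s - z k q‖ = ‖(s - p₀) - (z k q - p₀)‖ := by ring_nf
          _ ≤ ‖s - p₀‖ + ‖z k q - p₀‖ := norm_sub_le _ _
          _ ≤ δ + E := add_le_add hsp hEk
      have hprodT : ∏ k ∈ Sᶜ, ‖s - z k q‖ ≤ (2*M)^tc := by
        rw [htcdef, ← Finset.prod_const]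
        refine Finset.prod_le_prod (fun _ _ => norm_nonneg _) (fun k hk => ?_)
        have hzM : ‖z k q‖ ≤ M := by
          calc ‖z k q‖ = ‖z k q₀ + (z k q - z k q₀)‖ := by ring_nf
            _ ≤ ‖z k q₀‖ + ‖z k q - z k q₀‖ := norm_add_le _ _
            _ ≤ ‖z k q₀‖ + 1 := by have := le_of_lt (hEz k); linarith
            _ ≤ M := hMz k
        have hsM : ‖s‖ ≤ M := by
          calc ‖s‖ = ‖p₀ + (s - p₀)‖ := by ring_nf
            _ ≤ ‖p₀‖ + ‖s - p₀‖ := norm_add_le _ _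
            _ ≤ ‖p₀‖ + 1 := by linarith
            _ ≤ M := hMp
        calc ‖s - z k q‖ ≤ ‖s‖ + ‖z k q‖ := norm_sub_le _ _
          _ ≤ 2*M := by linarith
      have hδ0 : (0:ℝ) ≤ δ := norm_nonneg _
      have hpow : (δ + E)^m ≤ 2^m * (δ^m + E^m) := by
        have h3 : δ + E ≤ 2 * max δ E := by
          have := le_max_left δ E
          have := le_max_right δ E
          linarith
        calc (δ + E)^m ≤ (2 * max δ E)^m :=
              pow_le_pow_left₀ (by positivity) h3 m
          _ = 2^m * (max δ E)^m := mul_pow 2 (max δ E) m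
          _ ≤ 2^m * (δ^m + E^m) := by
              have hmx : (max δ E)^m ≤ δ^m + E^m := by
                rcases max_cases δ E with ⟨h, _⟩ | ⟨h, _⟩ <;> rw [h]
                · linarith [pow_nonneg hE0 m]
                · linarith [pow_nonneg hδ0 m]
              exact mul_le_mul_of_nonneg_left hmx (pow_nonneg (by norm_num) m)
      -- combine
      have hGle : ‖Gc n u s q‖ * (d/2)^tc ≤ 2^(m+1) * L * (2*M)^tc * ‖q - q₀‖ := by
        have h2M0 : (0:ℝ) ≤ (2*M)^tc := pow_nonneg (by linarith) tc
        have hd20 : (0:ℝ) ≤ (d/2)^tc := pow_nonneg (by linarith) tc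
        have hstep1 : ‖Gc n u s q‖ ≤ (δ + E)^m * (2*M)^tc := by
          rw [hfacq, ← Finset.prod_mul_prod_compl S (fun k => ‖s - z k q‖)]
          exact mul_le_mul hprodS hprodT
            (Finset.prod_nonneg fun _ _ => norm_nonneg _)
            (pow_nonneg (add_nonneg hδ0 hE0) m)
        calc ‖Gc n u s q‖ * (d/2)^tc ≤ ((δ + E)^m * (2*M)^tc) * (d/2)^tc :=
              mul_le_mul_of_nonneg_right hstep1 hd20
          _ ≤ ((2^m * (δ^m + E^m)) * (2*M)^tc) * (d/2)^tc :=
              mul_le_mul_of_nonneg_right (mul_le_mul_of_nonneg_right hpow h2M0) hd20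
          _ = 2^m * (2*M)^tc * ((δ^m + E^m) * (d/2)^tc) := by ring
          _ ≤ 2^m * (2*M)^tc * (2 * (L * ‖q - q₀‖)) := by
              have h4 : (δ^m + E^m) * (d/2)^tc ≤ 2 * (L * ‖q - q₀‖) := by
                rw [add_mul]; linarith
              refine mul_le_mul_of_nonneg_left h4 (mul_nonneg (pow_nonneg (by norm_num) m) h2M0)
          _ = 2^(m+1) * L * (2*M)^tc * ‖q - q₀‖ := by ring
      rw [hC₅def, div_mul_eq_mul_div, le_div_iff₀ (by positivity)]
      exact hGle
    -- mean value inequality on the segment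
    have hmvt : ‖Fc n u (lam q) q - Fc n u p₀ q‖ ≤ (C₅ * ‖q - q₀‖) * ‖lam q - p₀‖ := by
      refine Convex.norm_image_sub_le_of_norm_hasFDerivWithin_le (𝕜 := ℝ)
        (f := fun s => Fc n u s q)
        (f' := fun s => ContinuousLinearMap.restrictScalars ℝ
          ((1 : ℂ →L[ℂ] ℂ).smulRight (Gc n u s q)))
        (fun s _ => (((Fc_hasDerivAt n hn u q s).hasFDerivAt).restrictScalars ℝ).hasFDerivWithinAt)
        (fun s hs => ?_) (convex_segment _ _)
        (left_mem_segment ℝ _ _) (right_mem_segment ℝ _ _)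
      rw [ContinuousLinearMap.norm_restrictScalars]
      have : ‖(1 : ℂ →L[ℂ] ℂ).smulRight (Gc n u s q)‖ = ‖Gc n u s q‖ := by
        rw [ContinuousLinearMap.norm_smulRight_apply, ContinuousLinearMap.one_def,
          ContinuousLinearMap.norm_id, one_mul]
      rw [this]
      exact hseg s hs
    calc ‖Fc n u (lam q) q - Fc n u p₀ q‖ ≤ (C₅ * ‖q - q₀‖) * δ := hmvt
      _ ≤ (C₅ * ‖q - q₀‖) * (c / C₅) := by
          refine mul_le_mul_of_nonneg_left ?_ (by positivity)
          exact le_trans (le_of_lt hElam) hηc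
      _ = c * ‖q - q₀‖ := by field_simp
  exact hasFDerivAt_iff_isLittleO.2 ((key.add h1.isLittleO).congr'
    (Filter.Eventually.of_forall fun q => by ring)
    (Filter.Eventually.of_forall fun _ => rfl))
lemma benney_poly (n : ℕ) (hn : 3 ≤ n) (A B v : ℕ → ℝ) (hv0 : v 0 = 0)
    (hmid : ∀ i ∈ Finset.Icc 1 (n - 1),
        A i + B (i + 1) = ((n : ℝ) - i + 1) * v (i - 1) * B 1)
    (htop : A n = v (n - 1) * B 1) (p : ℂ) :
    (∑ i ∈ Finset.Icc 1 n, (A i : ℂ) * p ^ (n - i))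
      + p * ∑ i ∈ Finset.Icc 1 n, (B i : ℂ) * p ^ (n - i)
    = (B 1 : ℂ) * (p ^ n + ∑ i ∈ Finset.Icc 1 (n - 1),
        ((((n : ℝ) - i) * v i : ℝ) : ℂ) * p ^ (n - 1 - i)) := by
  obtain ⟨m, rfl⟩ : ∃ m, n = m + 3 := ⟨n - 3, by omega⟩
  have conv : ∀ (M : ℕ) (f : ℕ → ℂ),
      ∑ i ∈ Finset.Icc 1 M, f i * p ^ (M - i) = ∑ k ∈ Finset.range M, f (M - k) * p ^ k := by
    intro M f
    rw [← Finset.Ico_add_one_right_eq_Icc, Finset.sum_Ico_eq_sum_range]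
    rw [← Finset.sum_range_reflect]
    refine Finset.sum_congr ?_ fun k hk => ?_
    · congr 1
    · simp only [Finset.mem_range] at hk
      rw [show 1 + (M + 1 - 1 - 1 - k) = M - k from by omega,
        show M - (M - k) = k from by omega]
  have e1 : (m : ℕ) + 3 - 1 = m + 2 := by omega
  rw [e1]
  rw [conv (m + 3) (fun i => (A i : ℂ)), conv (m + 3) (fun i => (B i : ℂ)),
    conv (m + 2) (fun i => (((((m + 3 : ℕ) : ℝ)) - i) * v i : ℝ))]
  -- multiply p into the B-sum
  rw [Finset.mul_sum]
  rw [Finset.sum_congr rfl (fun k (_ : k ∈ Finset.range (m + 3)) =>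
    (by ring : p * ((B (m + 3 - k) : ℂ) * p ^ k) = (B (m + 3 - k) : ℂ) * p ^ (k + 1)))]
  -- peel top of B-sum (k = m+2), bottom of A-sum (k = 0)
  rw [show m + 3 = (m + 2) + 1 from rfl]
  rw [Finset.sum_range_succ (fun k => (B (m + 2 + 1 - k) : ℂ) * p ^ (k + 1)) (m + 2)]
  rw [Finset.sum_range_succ' (fun k => (A (m + 2 + 1 - k) : ℂ) * p ^ k) (m + 2)]
  have eB : (B (m + 2 + 1 - (m + 2)) : ℂ) * p ^ (m + 2 + 1) = (B 1 : ℂ) * p ^ (m + 2 + 1) := by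
    norm_num
  have eA0 : (A (m + 2 + 1 - 0) : ℂ) * p ^ 0 = (A (m + 3) : ℂ) := by norm_num
  rw [eB, eA0]
  -- combined main sums
  have hAB : ∑ k ∈ Finset.range (m + 2),
        ((A (m + 2 + 1 - (k + 1)) : ℂ) * p ^ (k + 1) + (B (m + 2 + 1 - k) : ℂ) * p ^ (k + 1))
      = ∑ k ∈ Finset.range (m + 2),
        ((((k : ℝ) + 2) * v (m + 1 - k) * B 1 : ℝ) : ℂ) * p ^ (k + 1) := by
    refine Finset.sum_congr rfl fun k hk => ?_
    simp only [Finset.mem_range] at hk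
    have h1 : m + 2 + 1 - (k + 1) = m + 2 - k := by omega
    have h2 : m + 2 + 1 - k = (m + 2 - k) + 1 := by omega
    have h4 := hmid (m + 2 - k) (by simp only [Finset.mem_Icc]; omega)
    have h5 : ((m + 3 : ℕ) : ℝ) - ((m + 2 - k : ℕ) : ℝ) + 1 = (k : ℝ) + 2 := by
      push_cast [Nat.cast_sub (by omega : k ≤ m + 2)]; ring
    have h6 : m + 2 - k - 1 = m + 1 - k := by omega
    rw [h1, h2, ← add_mul]
    rw [show ((A (m + 2 - k) : ℂ) + (B ((m + 2 - k) + 1) : ℂ))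
        = (((A (m + 2 - k) + B ((m + 2 - k) + 1) : ℝ)) : ℂ) from by push_cast; ring]
    rw [h4, h6, h5]
  have hAB2 : (∑ k ∈ Finset.range (m + 2), (A (m + 2 + 1 - (k + 1)) : ℂ) * p ^ (k + 1))
      + (∑ k ∈ Finset.range (m + 2), (B (m + 2 + 1 - k) : ℂ) * p ^ (k + 1))
      = ∑ k ∈ Finset.range (m + 2),
        ((((k : ℝ) + 2) * v (m + 1 - k) * B 1 : ℝ) : ℂ) * p ^ (k + 1) :=
    (Finset.sum_add_distrib).symm.trans hAB
  have hSC : ∑ k ∈ Finset.range (m + 2),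
        ((((k : ℝ) + 2) * v (m + 1 - k) * B 1 : ℝ) : ℂ) * p ^ (k + 1)
      = ∑ k ∈ Finset.range (m + 1),
        ((((k : ℝ) + 2) * v (m + 1 - k) * B 1 : ℝ) : ℂ) * p ^ (k + 1) := by
    rw [show m + 2 = (m + 1) + 1 from rfl, Finset.sum_range_succ]
    rw [show m + 1 - (m + 1) = 0 from by omega, hv0]
    norm_num
  have hSR : ∑ k ∈ Finset.range (m + 2),
        ((((((m + 2 + 1 : ℕ) : ℝ)) - ((m + 2 - k : ℕ) : ℝ)) * v (m + 2 - k) : ℝ) : ℂ) * p ^ k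
      = (∑ k ∈ Finset.range (m + 1),
          ((((k : ℝ) + 2) * v (m + 1 - k) : ℝ) : ℂ) * p ^ (k + 1)) + (v (m + 2) : ℂ) := by
    rw [show m + 2 = (m + 1) + 1 from rfl, Finset.sum_range_succ']
    congr 1
    · refine Finset.sum_congr rfl fun k hk => ?_
      simp only [Finset.mem_range] at hk
      have h1 : m + 1 + 1 - (k + 1) = m + 1 - k := by omega
      rw [h1]
      have h2 : (((m + 2 + 1 : ℕ) : ℝ) - ((m + 1 - k : ℕ) : ℝ)) * v (m + 1 - k)
          = ((k : ℝ) + 2) * v (m + 1 - k) := by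
        push_cast [Nat.cast_sub (by omega : k ≤ m + 1)]; ring
      rw [h2]
    · have h3 : (((m + 2 + 1 : ℕ) : ℝ) - ((m + 1 + 1 - 0 : ℕ) : ℝ)) * v (m + 1 + 1 - 0)
          = v (m + 2) := by
        rw [show m + 1 + 1 - 0 = m + 2 from by omega]
        push_cast; ring
      rw [h3]
      norm_num
  have hlink : ∑ k ∈ Finset.range (m + 1),
        ((((k : ℝ) + 2) * v (m + 1 - k) * B 1 : ℝ) : ℂ) * p ^ (k + 1)
      = (B 1 : ℂ) * ∑ k ∈ Finset.range (m + 1),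
        ((((k : ℝ) + 2) * v (m + 1 - k) : ℝ) : ℂ) * p ^ (k + 1) := by
    rw [Finset.mul_sum]
    exact Finset.sum_congr rfl fun k _ => by push_cast; ring
  have hAtop : ((A (m + 3) : ℝ) : ℂ) = (v (m + 2) : ℂ) * (B 1 : ℂ) := by
    rw [show (m + 2 : ℕ) = m + 3 - 1 from by omega, htop]; push_cast; ring
  linear_combination hAB2 + hSC + hlink + hAtop - (B 1 : ℂ) * hSR
lemma critval_contDiff
    (n : ℕ) (hn : 1 ≤ n) (u : ℕ → ℝ × ℝ → ℝ)
    (hu : ∀ i ∈ Finset.Icc 1 n, ContDiff ℝ 2 (u i))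
    {ι : Type} [Fintype ι] (z : ι → ℝ × ℝ → ℂ) (hz : ∀ k, Continuous (z k))
    (hfact : ∀ q p, Gc n u p q = ∏ k, (p - z k q))
    (lam : ℝ × ℝ → ℂ) (hlam : Continuous lam)
    (hroot : ∀ q, Gc n u (lam q) q = 0)
    (hne : ∀ q, ∃ k, z k q ≠ lam q) :
    ContDiff ℝ 1 (fun q => Fc n u (lam q) q) ∧
    ∀ q, fderiv ℝ (fun q => Fc n u (lam q) q) q = Dc n u (lam q) q := by
  have hder : ∀ q, HasFDerivAt (fun q => Fc n u (lam q) q) (Dc n u (lam q) q) q :=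
    fun q => critval_hasFDerivAt n hn u hu z hz hfact lam hlam hroot q (hne q)
  have hfd : ∀ q, fderiv ℝ (fun q => Fc n u (lam q) q) q = Dc n u (lam q) q :=
    fun q => (hder q).fderiv
  refine ⟨?_, hfd⟩
  rw [contDiff_one_iff_fderiv]
  refine ⟨fun q => (hder q).differentiableAt, ?_⟩
  rw [show (fderiv ℝ (fun q => Fc n u (lam q) q)) = fun q => Dc n u (lam q) q
    from funext hfd]
  exact Dc_cont n u hu lam hlam

lemma Dc_pde (n : ℕ) (hn3 : 3 ≤ n) (u : ℕ → ℝ × ℝ → ℝ) (hsol : IsBenney n u)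
    (w : ℂ) (q : ℝ × ℝ) (hw : Gc n u w q = 0) :
    Dc n u w q (1, 0) + w * Dc n u w q (0, 1) = 0 := by
  have hb : (∑ i ∈ Finset.Icc 1 n, ((pt (u i) q : ℝ) : ℂ) * w ^ (n - i))
      + w * ∑ i ∈ Finset.Icc 1 n, ((px (u i) q : ℝ) : ℂ) * w ^ (n - i)
      = ((px (u 1) q : ℝ) : ℂ) * Gc n u w q :=
    benney_poly n hn3 (fun i => pt (u i) q) (fun i => px (u i) q) (fun i => u i q)
      (hsol.1 q) (fun i hi => hsol.2.1 i hi q) (hsol.2.2 q) w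
  rw [Dc_apply, Dc_apply]
  have e1 : ∑ i ∈ Finset.Icc 1 n, w ^ (n - i) * ((fderiv ℝ (u i) q (1, 0) : ℝ) : ℂ)
      = ∑ i ∈ Finset.Icc 1 n, ((pt (u i) q : ℝ) : ℂ) * w ^ (n - i) :=
    Finset.sum_congr rfl fun i _ => by rw [pt]; ring
  have e2 : ∑ i ∈ Finset.Icc 1 n, w ^ (n - i) * ((fderiv ℝ (u i) q (0, 1) : ℝ) : ℂ)
      = ∑ i ∈ Finset.Icc 1 n, ((px (u i) q : ℝ) : ℂ) * w ^ (n - i) :=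
    Finset.sum_congr rfl fun i _ => by rw [px]; ring
  rw [e1, e2, hb, hw, mul_zero]

/-- Under the continuous-factorization hypothesis with one real
eigenvalue `μ` and `l` non-real eigenvalues `λⱼ`, the critical values
`ρ = F(μ(t,x),t,x)` and `rⱼ = F(λⱼ(t,x),t,x)` of
`F(p,t,x) = p^{n+1}/(n+1) + u₁p^{n−1} + ⋯ + uₙ` are `C¹` Riemann invariants:
`∂ₜρ + μ·∂ₓρ = 0` and `∂ₜrⱼ + λⱼ·∂ₓrⱼ = 0`. -/
theorem statement3
    (l n : ℕ) (hl : 1 ≤ l) (hn : n = 2 * l + 1)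
    (u : ℕ → ℝ × ℝ → ℝ)
    (hsmooth : ∀ i ∈ Finset.Icc 1 n, ContDiff ℝ 2 (u i))
    (hper : ∀ i ∈ Finset.Icc 1 n, ∀ t x : ℝ,
        u i (t + 1, x) = u i (t, x) ∧ u i (t, x + 1) = u i (t, x))
    (hsol : IsBenney n u)
    (μ : ℝ × ℝ → ℝ) (hμ : Continuous μ)
    (lam : ℕ → ℝ × ℝ → ℂ)
    (hlamcont : ∀ j ∈ Finset.Icc 1 l, Continuous (lam j))
    (hlamim : ∀ j ∈ Finset.Icc 1 l, ∀ q : ℝ × ℝ, (lam j q).im ≠ 0)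
    (hfact : ∀ q : ℝ × ℝ, ∀ p : ℂ,
        p ^ n + ∑ i ∈ Finset.Icc 1 (n - 1),
            ((((n : ℝ) - i) * u i q : ℝ) : ℂ) * p ^ (n - 1 - i)
        = (p - (μ q : ℂ)) *
            ∏ j ∈ Finset.Icc 1 l,
              ((p - lam j q) * (p - (starRingEnd ℂ) (lam j q))))
    (ρ : ℝ × ℝ → ℝ)
    (hρ : ∀ q : ℝ × ℝ,
        ρ q = (μ q) ^ (n + 1) / ((n : ℝ) + 1) + ∑ i ∈ Finset.Icc 1 n, u i q * (μ q) ^ (n - i))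
    (r : ℕ → ℝ × ℝ → ℂ)
    (hr : ∀ j ∈ Finset.Icc 1 l, ∀ q : ℝ × ℝ,
        r j q = (lam j q) ^ (n + 1) / ((n : ℂ) + 1) +
          ∑ i ∈ Finset.Icc 1 n, ((u i q : ℝ) : ℂ) * (lam j q) ^ (n - i)) :
    (ContDiff ℝ 1 ρ ∧ ∀ q : ℝ × ℝ, pt ρ q + μ q * px ρ q = 0) ∧
    (∀ j ∈ Finset.Icc 1 l,
      ContDiff ℝ 1 (r j) ∧ ∀ q : ℝ × ℝ, pt (r j) q + lam j q * px (r j) q = 0) := by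
  classical
  have hn1 : 1 ≤ n := by omega
  have hn3 : 3 ≤ n := by omega
  have h1l : 1 ∈ Finset.Icc 1 l := by simp only [Finset.mem_Icc]; omega
  -- the family of roots
  set ι : Type := Option ({j // j ∈ Finset.Icc 1 l} × Bool) with hιdef
  set z : ι → ℝ × ℝ → ℂ := fun k => k.elim (fun q => ((μ q : ℝ) : ℂ))
    (fun jb => bif jb.2 then lam jb.1.1 else fun q => (starRingEnd ℂ) (lam jb.1.1 q))
    with hzdef
  have hz : ∀ k : ι, Continuous (z k) := by
    rintro (_ | ⟨j, b⟩)
    · exact Complex.continuous_ofReal.comp hμ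
    · cases b
      · exact continuous_star.comp (hlamcont j.1 j.2)
      · exact hlamcont j.1 j.2
  have hGfact : ∀ q p, Gc n u p q = ∏ k : ι, (p - z k q) := by
    intro q p
    have h1 : ∏ k : ι, (p - z k q) = (p - ((μ q : ℝ) : ℂ)) *
        ∏ j ∈ Finset.Icc 1 l, ((p - lam j q) * (p - (starRingEnd ℂ) (lam j q))) := by
      rw [Fintype.prod_option]
      congr 1
      rw [Fintype.prod_prod_type]
      rw [show (fun j : {j // j ∈ Finset.Icc 1 l} => ∏ b : Bool, (p - z (some (j, b)) q))
          = fun j => (p - lam j.1 q) * (p - (starRingEnd ℂ) (lam j.1 q)) from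
        funext fun j => by rw [Fintype.prod_bool]; rfl]
      exact Finset.prod_coe_sort (Finset.Icc 1 l)
        (fun j => (p - lam j q) * (p - (starRingEnd ℂ) (lam j q)))
    rw [h1]
    exact hfact q p
  -- roots
  have hrootμ : ∀ q, Gc n u ((μ q : ℝ) : ℂ) q = 0 := by
    intro q
    have h : Gc n u ((μ q : ℝ) : ℂ) q = (((μ q : ℝ) : ℂ) - ((μ q : ℝ) : ℂ)) *
        ∏ j ∈ Finset.Icc 1 l, ((((μ q : ℝ) : ℂ) - lam j q) *
          (((μ q : ℝ) : ℂ) - (starRingEnd ℂ) (lam j q))) := hfact q _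
    rw [h, sub_self, zero_mul]
  have hrootlam : ∀ j ∈ Finset.Icc 1 l, ∀ q, Gc n u (lam j q) q = 0 := by
    intro j hj q
    have h : Gc n u (lam j q) q = ((lam j q) - ((μ q : ℝ) : ℂ)) *
        ∏ j' ∈ Finset.Icc 1 l, (((lam j q) - lam j' q) *
          ((lam j q) - (starRingEnd ℂ) (lam j' q))) := hfact q _
    rw [h]
    apply mul_eq_zero_of_right
    exact Finset.prod_eq_zero hj (by rw [sub_self, zero_mul])
  -- ρ part
  have hneμ : ∀ q, ∃ k : ι, z k q ≠ ((μ q : ℝ) : ℂ) := by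
    intro q
    refine ⟨some (⟨1, h1l⟩, true), fun h => ?_⟩
    have him := hlamim 1 h1l q
    have : (lam 1 q).im = ((μ q : ℝ) : ℂ).im := by
      rw [← h]; rfl
    rw [Complex.ofReal_im] at this
    exact him this
  obtain ⟨hC1μ, hfdμ⟩ := critval_contDiff n hn1 u hsmooth z hz hGfact
    (fun q => ((μ q : ℝ) : ℂ)) (Complex.continuous_ofReal.comp hμ) hrootμ hneμ
  have hρc : (fun q => Fc n u ((μ q : ℝ) : ℂ) q) = fun q => ((ρ q : ℝ) : ℂ) := by
    funext q
    rw [hρ q]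
    show (((μ q : ℝ) : ℂ)) ^ (n + 1) / ((n : ℂ) + 1)
        + ∑ i ∈ Finset.Icc 1 n, ((u i q : ℝ) : ℂ) * (((μ q : ℝ) : ℂ)) ^ (n - i) = _
    push_cast
    ring
  have hρre : ρ = fun q => Complex.reCLM (Fc n u ((μ q : ℝ) : ℂ) q) := by
    funext q
    rw [show Fc n u ((μ q : ℝ) : ℂ) q = ((ρ q : ℝ) : ℂ) from congrFun hρc q]
    simp
  have hdiffμ : ∀ q, DifferentiableAt ℝ (fun q => Fc n u ((μ q : ℝ) : ℂ) q) q :=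
    fun q => (hC1μ.differentiable one_ne_zero) q
  have hfdρ : ∀ q, fderiv ℝ ρ q
      = Complex.reCLM.comp (Dc n u ((μ q : ℝ) : ℂ) q) := by
    intro q
    rw [hρre]
    have hcomp : HasFDerivAt (fun q => Complex.reCLM (Fc n u ((μ q : ℝ) : ℂ) q))
        (Complex.reCLM.comp (fderiv ℝ (fun q => Fc n u ((μ q : ℝ) : ℂ) q) q)) q :=
      Complex.reCLM.hasFDerivAt.comp q (hdiffμ q).hasFDerivAt
    rw [hcomp.fderiv, hfdμ q]
  constructor
  · constructor
    · rw [hρre]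
      exact Complex.reCLM.contDiff.comp hC1μ
    · intro q
      have h10 : pt ρ q = (Dc n u ((μ q : ℝ) : ℂ) q (1, 0)).re := by
        rw [pt, hfdρ q]; rfl
      have h01 : px ρ q = (Dc n u ((μ q : ℝ) : ℂ) q (0, 1)).re := by
        rw [px, hfdρ q]; rfl
      rw [h10, h01]
      have hre : (Dc n u ((μ q : ℝ) : ℂ) q (1, 0)).re
            + μ q * (Dc n u ((μ q : ℝ) : ℂ) q (0, 1)).re
          = ((Dc n u ((μ q : ℝ) : ℂ) q (1, 0))
            + ((μ q : ℝ) : ℂ) * (Dc n u ((μ q : ℝ) : ℂ) q (0, 1))).re := by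
        simp [Complex.add_re, Complex.mul_re]
      rw [hre, Dc_pde n hn3 u hsol _ q (hrootμ q), Complex.zero_re]
  · intro j hj
    have hnej : ∀ q, ∃ k : ι, z k q ≠ lam j q := by
      intro q
      refine ⟨none, fun h => ?_⟩
      have him := hlamim j hj q
      have : ((μ q : ℝ) : ℂ).im = (lam j q).im := by rw [← h]; rfl
      rw [Complex.ofReal_im] at this
      exact him this.symm
    obtain ⟨hC1j, hfdj⟩ := critval_contDiff n hn1 u hsmooth z hz hGfact
      (lam j) (hlamcont j hj) (hrootlam j hj) hnej
    have hrj : r j = fun q => Fc n u (lam j q) q := by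
      funext q
      rw [hr j hj q]
      rfl
    refine ⟨by rw [hrj]; exact hC1j, ?_⟩
    intro q
    rw [pt, px, hrj, hfdj q]
    exact Dc_pde n hn3 u hsol _ q (hrootlam j hj q)
end

section
/- Let n ≥ 2, μ ∈ ℝ, and let V = (v₁,...,vₙ) : ℝ → ℝⁿ be a non-constant C¹ periodic function such that U(t,x) := V(x − μt) is a solution of the dispersionless Lax reduction of the Benney chain; equivalently, setting v₀ := 0, the components satisfy the ODE system μ·vᵢ′ = −(n−i+1)·v_{i−1}·v₁′ + v_{i+1}′ for i = 1,...,n−1 and μ·vₙ′ = −v_{n−1}·v₁′, together with the eigenvalue relation μⁿ + (n−1)v₁μ^{n−2} + (n−2)v₂μ^{n−3} + ⋯ + v_{n−1} = 0. Then μ = 0. -/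
open Finset

/-- The factor `C_j` such that `v_j' = C_j · v_1'` along the profile. -/
noncomputable def S8C (n : ℕ) (μ : ℝ) (v : ℕ → ℝ → ℝ) (j : ℕ) (s : ℝ) : ℝ :=
  μ ^ (j - 1) + ∑ l ∈ Finset.Icc 1 (j - 2), ((n : ℝ) - l) * v l s * μ ^ (j - 2 - l)

/-- The linear expressions appearing in the chain of differentiated eigenvalue relations. -/
noncomputable def S8E (μ : ℝ) (v : ℕ → ℝ → ℝ) (m : ℕ) (φ : ℕ → ℝ) (s : ℝ) : ℝ :=
  φ 0 * μ ^ (m + 1) + ∑ j ∈ Finset.Icc 1 m, φ j * v j s * μ ^ (m - j)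

lemma s8swap (m : ℕ) (g : ℕ → ℕ → ℝ) :
    ∑ j ∈ Finset.Icc 1 m, ∑ l ∈ Finset.Icc 1 (j - 2), g l j
      = ∑ l ∈ Finset.Icc 1 (m - 2), ∑ j ∈ Finset.Icc (l + 2) m, g l j := by
  have h1 : ∀ j ∈ Finset.Icc 1 m,
      (∑ l ∈ Finset.Icc 1 (j - 2), g l j)
        = ∑ l ∈ Finset.Icc 1 (m - 2), if l + 2 ≤ j then g l j else 0 := by
    intro j hj
    rw [Finset.mem_Icc] at hj
    have hset : Finset.Icc 1 (j - 2) = (Finset.Icc 1 (m - 2)).filter (fun l => l + 2 ≤ j) := by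
      ext l
      simp only [Finset.mem_Icc, Finset.mem_filter]
      omega
    rw [hset, Finset.sum_filter]
  rw [Finset.sum_congr rfl h1, Finset.sum_comm]
  refine Finset.sum_congr rfl fun l hl => ?_
  rw [Finset.mem_Icc] at hl
  have hset : Finset.Icc (l + 2) m = (Finset.Icc 1 m).filter (fun j => l + 2 ≤ j) := by
    ext j
    simp only [Finset.mem_Icc, Finset.mem_filter]
    omega
  rw [hset, Finset.sum_filter]

lemma s8C_rec (n : ℕ) (μ : ℝ) (v : ℕ → ℝ → ℝ) (hv0 : ∀ s : ℝ, v 0 s = 0)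
    (i : ℕ) (hi : 1 ≤ i) (s : ℝ) :
    S8C n μ v (i + 1) s = μ * S8C n μ v i s + ((n : ℝ) - i + 1) * v (i - 1) s := by
  match i, hi with
  | 1, _ => simp [S8C, hv0]
  | (k+2), _ =>
      show μ ^ (k + 2) + ∑ l ∈ Finset.Icc 1 (k + 1), ((n : ℝ) - l) * v l s * μ ^ (k + 1 - l)
        = μ * (μ ^ (k + 1) + ∑ l ∈ Finset.Icc 1 k, ((n : ℝ) - l) * v l s * μ ^ (k - l))
          + ((n : ℝ) - (↑(k + 2) : ℝ) + 1) * v (k + 1) s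
      rw [Finset.sum_Icc_succ_top (by omega : 1 ≤ k + 1)]
      have hsum : ∑ l ∈ Finset.Icc 1 k, ((n : ℝ) - l) * v l s * μ ^ (k + 1 - l)
          = ∑ l ∈ Finset.Icc 1 k, μ * (((n : ℝ) - l) * v l s * μ ^ (k - l)) := by
        refine Finset.sum_congr rfl fun l hl => ?_
        rw [Finset.mem_Icc] at hl
        rw [show k + 1 - l = (k - l) + 1 by omega, pow_succ]
        ring
      rw [hsum, show k + 1 - (k + 1) = 0 by omega, mul_add, Finset.mul_sum]
      push_cast
      ring

lemma s8C_deriv (n : ℕ) (μ : ℝ) (v : ℕ → ℝ → ℝ) (hv0 : ∀ s : ℝ, v 0 s = 0)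
    (hode : ∀ i ∈ Finset.Icc 1 (n - 1), ∀ s : ℝ,
        μ * deriv (v i) s = -(((n : ℝ) - i + 1) * v (i - 1) s * deriv (v 1) s)
          + deriv (v (i + 1)) s)
    (j : ℕ) (hj1 : 1 ≤ j) (hjn : j ≤ n) (s : ℝ) :
    deriv (v j) s = S8C n μ v j s * deriv (v 1) s := by
  revert hjn
  induction j, hj1 using Nat.le_induction with
  | base =>
    intro _
    simp [S8C, show Finset.Icc 1 0 = (∅ : Finset ℕ) from rfl]
  | succ j hj ih =>
    intro hjn
    have hmem : j ∈ Finset.Icc 1 (n - 1) := by rw [Finset.mem_Icc]; omega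
    have h := hode j hmem s
    have h2 : deriv (v (j + 1)) s
        = μ * deriv (v j) s + ((n : ℝ) - j + 1) * v (j - 1) s * deriv (v 1) s := by linarith
    rw [h2, ih (by omega), s8C_rec n μ v hv0 j hj s]
    ring

lemma s8_expand (n m : ℕ) (μ : ℝ) (v : ℕ → ℝ → ℝ) (φ : ℕ → ℝ) (hm : 2 ≤ m) (s : ℝ) :
    ∑ j ∈ Finset.Icc 1 m, φ j * S8C n μ v j s * μ ^ (m - j)
      = (∑ j ∈ Finset.Icc 1 m, φ j) * μ ^ (m - 2 + 1)
        + ∑ l ∈ Finset.Icc 1 (m - 2),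
            (((n : ℝ) - l) * ∑ j ∈ Finset.Icc (l + 2) m, φ j) * v l s * μ ^ (m - 2 - l) := by
  have expand : ∀ j ∈ Finset.Icc 1 m, φ j * S8C n μ v j s * μ ^ (m - j)
      = φ j * μ ^ (m - 2 + 1)
        + ∑ l ∈ Finset.Icc 1 (j - 2), φ j * (((n : ℝ) - l) * v l s * μ ^ (m - 2 - l)) := by
    intro j hj
    rw [Finset.mem_Icc] at hj
    unfold S8C
    have e1 : μ ^ (j - 1) * μ ^ (m - j) = μ ^ (m - 2 + 1) := by
      rw [← pow_add]
      congr 1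
      omega
    have e2 : (∑ l ∈ Finset.Icc 1 (j - 2), ((n : ℝ) - l) * v l s * μ ^ (j - 2 - l)) * μ ^ (m - j)
        = ∑ l ∈ Finset.Icc 1 (j - 2), ((n : ℝ) - l) * v l s * μ ^ (m - 2 - l) := by
      rw [Finset.sum_mul]
      refine Finset.sum_congr rfl fun l hl => ?_
      rw [Finset.mem_Icc] at hl
      rw [mul_assoc, ← pow_add, show j - 2 - l + (m - j) = m - 2 - l by omega]
    calc φ j * (μ ^ (j - 1) + ∑ l ∈ Finset.Icc 1 (j - 2), ((n : ℝ) - l) * v l s * μ ^ (j - 2 - l)) * μ ^ (m - j)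
        = φ j * (μ ^ (j - 1) * μ ^ (m - j))
          + φ j * ((∑ l ∈ Finset.Icc 1 (j - 2), ((n : ℝ) - l) * v l s * μ ^ (j - 2 - l)) * μ ^ (m - j)) := by
          ring
      _ = φ j * μ ^ (m - 2 + 1)
          + φ j * ∑ l ∈ Finset.Icc 1 (j - 2), ((n : ℝ) - l) * v l s * μ ^ (m - 2 - l) := by
          rw [e1, e2]
      _ = φ j * μ ^ (m - 2 + 1)
          + ∑ l ∈ Finset.Icc 1 (j - 2), φ j * (((n : ℝ) - l) * v l s * μ ^ (m - 2 - l)) := by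
          rw [Finset.mul_sum]
  rw [Finset.sum_congr rfl expand, Finset.sum_add_distrib]
  congr 1
  · rw [← Finset.sum_mul]
  · rw [s8swap m (fun l j => φ j * (((n : ℝ) - l) * v l s * μ ^ (m - 2 - l)))]
    refine Finset.sum_congr rfl fun l hl => ?_
    rw [← Finset.sum_mul]
    ring

/-- Let `V = (v₁, …, vₙ)` (with `v₀ = 0`) be a non-constant `C¹`
periodic profile of a traveling-wave solution `U(t,x) = V(x − μt)` of the
dispersionless Lax reduction of the Benney chain, i.e. the components satisfy
`μ·vᵢ' = −(n−i+1)·v_{i−1}·v₁' + v_{i+1}'` for `i = 1, …, n−1`,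
`μ·vₙ' = −v_{n−1}·v₁'`, together with the eigenvalue relation
`μⁿ + (n−1)v₁μ^{n−2} + (n−2)v₂μ^{n−3} + ⋯ + v_{n−1} = 0`. Then `μ = 0`. -/
theorem statement8
    (n : ℕ) (hn : 2 ≤ n) (μ : ℝ)
    (v : ℕ → ℝ → ℝ)
    (hv0 : ∀ s : ℝ, v 0 s = 0)
    (hsmooth : ∀ i ∈ Finset.Icc 1 n, ContDiff ℝ 1 (v i))
    (T : ℝ) (hT : 0 < T)
    (hper : ∀ i ∈ Finset.Icc 1 n, ∀ s : ℝ, v i (s + T) = v i s)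
    (hnonconst : ∃ i ∈ Finset.Icc 1 n, ∃ s s' : ℝ, v i s ≠ v i s')
    (hode : ∀ i ∈ Finset.Icc 1 (n - 1), ∀ s : ℝ,
        μ * deriv (v i) s = -(((n : ℝ) - i + 1) * v (i - 1) s * deriv (v 1) s)
          + deriv (v (i + 1)) s)
    (hoden : ∀ s : ℝ, μ * deriv (v n) s = -(v (n - 1) s * deriv (v 1) s))
    (heigen : ∀ s : ℝ,
        μ ^ n + ∑ i ∈ Finset.Icc 1 (n - 1), ((n : ℝ) - i) * v i s * μ ^ (n - 1 - i) = 0) :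
    μ = 0 := by
  by_contra hμ
  have h1n : (1 : ℕ) ∈ Finset.Icc 1 n := by rw [Finset.mem_Icc]; omega
  have hdiff : ∀ j ∈ Finset.Icc 1 n, Differentiable ℝ (v j) :=
    fun j hj => (hsmooth j hj).differentiable one_ne_zero
  have hcont1 : Continuous (deriv (v 1)) := (hsmooth 1 h1n).continuous_deriv le_rfl
  have hC := s8C_deriv n μ v hv0 hode
  have hEderiv : ∀ m, m ≤ n - 1 → ∀ φ : ℕ → ℝ, ∀ s : ℝ,
      deriv (S8E μ v m φ) s
        = ∑ j ∈ Finset.Icc 1 m, φ j * deriv (v j) s * μ ^ (m - j) := by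
    intro m hm φ s
    have hterm : ∀ j ∈ Finset.Icc 1 m,
        HasDerivAt (fun t => φ j * v j t * μ ^ (m - j)) (φ j * deriv (v j) s * μ ^ (m - j)) s := by
      intro j hj
      rw [Finset.mem_Icc] at hj
      have hjn : j ∈ Finset.Icc 1 n := by rw [Finset.mem_Icc]; omega
      exact (((hdiff j hjn s).hasDerivAt.const_mul (φ j)).mul_const (μ ^ (m - j)))
    have H := (hasDerivAt_const s (φ 0 * μ ^ (m + 1))).add (HasDerivAt.sum hterm)
    rw [zero_add] at H
    have hf : S8E μ v m φ = (fun x => φ 0 * μ ^ (m + 1))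
        + ∑ i ∈ Finset.Icc 1 m, fun t => φ i * v i t * μ ^ (m - i) := by
      funext t
      simp only [S8E, Pi.add_apply, Finset.sum_apply]
    rw [hf]
    exact H.deriv
  have key : ∀ m, m ≤ n - 1 → ∀ φ : ℕ → ℝ, 0 < φ 0 → (∀ j ∈ Finset.Icc 1 m, 0 < φ j) →
      (∀ s : ℝ, S8E μ v m φ s * deriv (v 1) s = 0) → ∀ s : ℝ, deriv (v 1) s = 0 := by
    intro m
    induction m using Nat.strong_induction_on with
    | _ m ih =>
      intro hmn φ hφ0 hφ hQ
      by_cases hm2 : 2 ≤ m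
      · -- inductive step: differentiate the relation
        set φ' : ℕ → ℝ := fun l => if l = 0 then ∑ j ∈ Finset.Icc 1 m, φ j
          else ((n : ℝ) - l) * ∑ j ∈ Finset.Icc (l + 2) m, φ j with hφ'def
        refine ih (m - 2) (by omega) (by omega) φ' ?_ ?_ ?_
        · simp only [hφ'def, if_pos rfl]
          exact Finset.sum_pos hφ (Finset.nonempty_Icc.mpr (by omega))
        · intro l hl
          rw [Finset.mem_Icc] at hl
          simp only [hφ'def, if_neg (by omega : ¬ l = 0)]
          apply mul_pos
          · have hln : (l : ℝ) < n := by exact_mod_cast (show l < n by omega)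
            linarith
          · refine Finset.sum_pos (fun j hj => ?_) (Finset.nonempty_Icc.mpr (by omega))
            rw [Finset.mem_Icc] at hj
            exact hφ j (by rw [Finset.mem_Icc]; omega)
        · intro t
          by_cases h1 : deriv (v 1) t = 0
          · rw [h1, mul_zero]
          · have hev : ∀ᶠ u in nhds t, S8E μ v m φ u = (fun _ => (0 : ℝ)) u := by
              have hne := (hcont1.continuousAt (x := t)).eventually_ne h1
              filter_upwards [hne] with u hu
              rcases mul_eq_zero.mp (hQ u) with h | h
              · exact h
              · exact absurd h hu
            have hd0 : deriv (S8E μ v m φ) t = 0 := by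
              rw [Filter.EventuallyEq.deriv_eq hev]
              exact deriv_const t 0
            rw [hEderiv m hmn φ t] at hd0
            have h2 : ∀ j ∈ Finset.Icc 1 m, φ j * deriv (v j) t * μ ^ (m - j)
                = (φ j * S8C n μ v j t * μ ^ (m - j)) * deriv (v 1) t := by
              intro j hj
              rw [Finset.mem_Icc] at hj
              rw [hC j (by omega) (by omega) t]
              ring
            rw [Finset.sum_congr rfl h2, ← Finset.sum_mul, s8_expand n m μ v φ hm2 t] at hd0
            have hEeq : S8E μ v (m - 2) φ' t
                = (∑ j ∈ Finset.Icc 1 m, φ j) * μ ^ (m - 2 + 1)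
                  + ∑ l ∈ Finset.Icc 1 (m - 2),
                      (((n : ℝ) - l) * ∑ j ∈ Finset.Icc (l + 2) m, φ j) * v l t * μ ^ (m - 2 - l) := by
              unfold S8E
              simp only [hφ'def, if_pos rfl]
              congr 1
              refine Finset.sum_congr rfl fun l hl => ?_
              rw [Finset.mem_Icc] at hl
              rw [if_neg (by omega)]
            rw [hEeq]
            exact hd0
      · intro s
        rcases (by omega : m = 0 ∨ m = 1) with rfl | rfl
        · rcases mul_eq_zero.mp (hQ s) with h | h
          · exfalso
            apply hμ
            have h0 : S8E μ v 0 φ s = φ 0 * μ := by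
              unfold S8E
              rw [show Finset.Icc 1 0 = (∅ : Finset ℕ) from rfl]
              simp
            rw [h0] at h
            rcases mul_eq_zero.mp h with h' | h'
            · exact absurd h' (ne_of_gt hφ0)
            · exact h'
          · exact h
        · by_contra h1
          have hev : ∀ᶠ u in nhds s, S8E μ v 1 φ u = (fun _ => (0 : ℝ)) u := by
            have hne := (hcont1.continuousAt (x := s)).eventually_ne h1
            filter_upwards [hne] with u hu
            rcases mul_eq_zero.mp (hQ u) with h | h
            · exact h
            · exact absurd h hu
          have hd0 : deriv (S8E μ v 1 φ) s = 0 := by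
            rw [Filter.EventuallyEq.deriv_eq hev]
            exact deriv_const s 0
          rw [hEderiv 1 hmn φ s] at hd0
          rw [show Finset.Icc 1 1 = ({1} : Finset ℕ) from rfl] at hd0
          rw [Finset.sum_singleton, show (1:ℕ) - 1 = 0 from rfl, pow_zero, mul_one] at hd0
          have hφ1 : 0 < φ 1 := hφ 1 (by rw [Finset.mem_Icc]; omega)
          rcases mul_eq_zero.mp hd0 with h | h
          · exact absurd h (ne_of_gt hφ1)
          · exact h1 h
  -- apply the induction to the eigenvalue relation
  have hd1 : ∀ s : ℝ, deriv (v 1) s = 0 := by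
    refine key (n - 1) le_rfl (fun j => if j = 0 then 1 else (n : ℝ) - j) (by simp) ?_ ?_
    · intro j hj
      rw [Finset.mem_Icc] at hj
      show (0:ℝ) < if j = 0 then 1 else (n : ℝ) - j
      rw [if_neg (by omega : ¬ j = 0)]
      have hln : (j : ℝ) < n := by exact_mod_cast (show j < n by omega)
      linarith
    · intro s
      have hE : S8E μ v (n - 1) (fun j => if j = 0 then 1 else (n : ℝ) - j) s = 0 := by
        show (if (0:ℕ) = 0 then (1:ℝ) else (n : ℝ) - (0:ℕ)) * μ ^ (n - 1 + 1)
            + ∑ j ∈ Finset.Icc 1 (n - 1),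
                (if j = 0 then (1:ℝ) else (n : ℝ) - j) * v j s * μ ^ (n - 1 - j) = 0
        rw [if_pos rfl, one_mul, show n - 1 + 1 = n by omega]
        have hsum : ∑ j ∈ Finset.Icc 1 (n - 1),
            (if j = 0 then (1 : ℝ) else (n : ℝ) - j) * v j s * μ ^ (n - 1 - j)
              = ∑ j ∈ Finset.Icc 1 (n - 1), ((n : ℝ) - j) * v j s * μ ^ (n - 1 - j) := by
          refine Finset.sum_congr rfl fun j hj => ?_
          rw [Finset.mem_Icc] at hj
          rw [if_neg (by omega)]
        rw [hsum]
        exact heigen s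
      rw [hE, zero_mul]
  obtain ⟨i, hi, s, s', hne⟩ := hnonconst
  apply hne
  apply is_const_of_deriv_eq_zero (hdiff i hi)
  intro x
  rw [Finset.mem_Icc] at hi
  rw [hC i hi.1 hi.2 x, hd1 x, mul_zero]
end

section
/- Let w, v : ℝ² → ℝ be C¹ functions of (t,x) solving the system w_t + (wv)_x = 0 and v_t + (w²/2 − 3v²/2)_x = 0. Define f := v + √5·w, g := v − √5·w, u₁ := −(3f² + 4fg + 3g²)/5, and F(p,t,x) := (1/5)(p − f)²(p − g)²(p + 2f + 2g). Then F is a polynomial in p of the form (1/5)p⁵ + u₁p³ + u₂p² + u₃p + u₄ (no p⁴ term, with u₂, u₃, u₄ certain polynomial expressions in f and g), and F satisfies the conservation equation ∂_t F + p·∂_x F − (∂_x u₁)·∂_p F = 0 for all p ∈ ℝ and all (t,x). Consequently (u₁,u₂,u₃,u₄) solves the dispersionless Lax reduction of the Benney chain with n = 4. -/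
theorem fda (a b : ℝ × ℝ → ℝ) (q d : ℝ × ℝ) (ha : DifferentiableAt ℝ a q) (hb : DifferentiableAt ℝ b q) :
    fderiv ℝ (fun z => a z + b z) q d = fderiv ℝ a q d + fderiv ℝ b q d := by
  rw [fderiv_fun_add ha hb]; simp

theorem fds (a b : ℝ × ℝ → ℝ) (q d : ℝ × ℝ) (ha : DifferentiableAt ℝ a q) (hb : DifferentiableAt ℝ b q) :
    fderiv ℝ (fun z => a z - b z) q d = fderiv ℝ a q d - fderiv ℝ b q d := by
  rw [fderiv_fun_sub ha hb]; simp

theorem fdm (a b : ℝ × ℝ → ℝ) (q d : ℝ × ℝ) (ha : DifferentiableAt ℝ a q) (hb : DifferentiableAt ℝ b q) :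
    fderiv ℝ (fun z => a z * b z) q d = fderiv ℝ a q d * b q + a q * fderiv ℝ b q d := by
  rw [fderiv_fun_mul ha hb]; simp; ring

theorem fdcm (a : ℝ × ℝ → ℝ) (c : ℝ) (q d : ℝ × ℝ) (ha : DifferentiableAt ℝ a q) :
    fderiv ℝ (fun z => c * a z) q d = c * fderiv ℝ a q d := by
  rw [fderiv_const_mul ha]; simp

theorem fdneg (a : ℝ × ℝ → ℝ) (q d : ℝ × ℝ) :
    fderiv ℝ (fun z => -a z) q d = -fderiv ℝ a q d := by
  rw [fderiv_fun_neg]; simp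

theorem fdconst (c : ℝ) (q d : ℝ × ℝ) :
    fderiv ℝ (fun _ : ℝ × ℝ => c) q d = 0 := by
  rw [fderiv_fun_const]; simp

theorem fdp (a : ℝ × ℝ → ℝ) (n : ℕ) (q d : ℝ × ℝ) (ha : DifferentiableAt ℝ a q) :
    fderiv ℝ (fun z => a z ^ n) q d = n * a q ^ (n - 1) * fderiv ℝ a q d := by
  induction n with
  | zero => simp [fdconst]
  | succ n ih =>
    have h : (fun z => a z ^ (n + 1)) = fun z => a z ^ n * a z := by funext z; ring
    rw [h, fdm _ _ _ _ (ha.fun_pow n) ha, ih]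
    cases n with
    | zero => simp
    | succ m => simp only [Nat.add_sub_cancel]; push_cast; ring


/-- If `(w,v)` solves `wₜ + (wv)ₓ = 0`,
`vₜ + (w²/2 − 3v²/2)ₓ = 0`, then with `f = v + √5·w`, `g = v − √5·w`,
`u₁ = −(3f² + 4fg + 3g²)/5` and `F(p) = (1/5)(p−f)²(p−g)²(p+2f+2g)`, the
function `F` has the form `(1/5)p⁵ + u₁p³ + u₂p² + u₃p + u₄`, satisfies the
conservation equation `Fₜ + pFₓ − (u₁)ₓFₚ = 0`, and `(u₁,u₂,u₃,u₄)` solves the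
`n = 4` dispersionless Lax reduction of the Benney chain. -/
theorem statement10
    (w v : ℝ × ℝ → ℝ) (hw : ContDiff ℝ 1 w) (hv : ContDiff ℝ 1 v)
    (hsys1 : ∀ q : ℝ × ℝ, pt w q + px (fun z => w z * v z) q = 0)
    (hsys2 : ∀ q : ℝ × ℝ, pt v q + px (fun z => (w z) ^ 2 / 2 - 3 * (v z) ^ 2 / 2) q = 0)
    (f g u1 : ℝ × ℝ → ℝ) (F : ℝ → ℝ × ℝ → ℝ)
    (hf : ∀ q : ℝ × ℝ, f q = v q + Real.sqrt 5 * w q)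
    (hg : ∀ q : ℝ × ℝ, g q = v q - Real.sqrt 5 * w q)
    (hu1 : ∀ q : ℝ × ℝ, u1 q = -(3 * (f q) ^ 2 + 4 * f q * g q + 3 * (g q) ^ 2) / 5)
    (hFdef : ∀ (p : ℝ) (q : ℝ × ℝ),
        F p q = (1 / 5) * (p - f q) ^ 2 * (p - g q) ^ 2 * (p + 2 * f q + 2 * g q)) :
    ∃ u2 u3 u4 : ℝ × ℝ → ℝ,
      (∀ (p : ℝ) (q : ℝ × ℝ),
          F p q = (1 / 5) * p ^ 5 + u1 q * p ^ 3 + u2 q * p ^ 2 + u3 q * p + u4 q) ∧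
      (∀ (p : ℝ) (q : ℝ × ℝ),
          pt (F p) q + p * px (F p) q - px u1 q * deriv (fun p' : ℝ => F p' q) p = 0) ∧
      (∀ q : ℝ × ℝ, pt u1 q + px u2 q = 0) ∧
      (∀ q : ℝ × ℝ, pt u2 q + px u3 q = 3 * u1 q * px u1 q) ∧
      (∀ q : ℝ × ℝ, pt u3 q + px u4 q = 2 * u2 q * px u1 q) ∧
      (∀ q : ℝ × ℝ, pt u4 q = u3 q * px u1 q) := by
  have hwD : Differentiable ℝ w := hw.differentiable one_ne_zero
  have hvD : Differentiable ℝ v := hv.differentiable one_ne_zero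
  have s5 : Real.sqrt 5 ^ 2 = 5 := Real.sq_sqrt (by norm_num)
  have hu1val : ∀ z : ℝ × ℝ, u1 z = -2 * (v z) ^ 2 - 2 * (w z) ^ 2 := by
    intro z; rw [hu1, hf, hg]; linear_combination (-(2 : ℝ) / 5 * (w z) ^ 2) * s5
  have hu1fun : u1 = (fun z : ℝ × ℝ => -2 * (v z) ^ 2 - 2 * (w z) ^ 2) := funext hu1val
  have hu1D : Differentiable ℝ u1 := by rw [hu1fun]; fun_prop
  have S1 : ∀ q : ℝ × ℝ, fderiv ℝ w q (1, 0) + (fderiv ℝ w q (0, 1) * v q + w q * fderiv ℝ v q (0, 1)) = 0 := by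
    intro q
    have h := hsys1 q
    simp only [pt, px] at h
    rw [fdm w v q (0, 1) (hwD q) (hvD q)] at h
    exact h
  have S2 : ∀ q : ℝ × ℝ, fderiv ℝ v q (1, 0) + (w q * fderiv ℝ w q (0, 1) - 3 * v q * fderiv ℝ v q (0, 1)) = 0 := by
    intro q
    have h := hsys2 q
    simp only [pt, px] at h
    have e : (fun z => (w z) ^ 2 / 2 - 3 * (v z) ^ 2 / 2) = fun z => (1 / 2) * (w z) ^ 2 - (3 / 2) * (v z) ^ 2 := by
      funext z; ring
    rw [e] at h
    simp (disch := fun_prop) only [fda, fds, fdm, fdcm, fdp, fdconst, fdneg] at h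
    push_cast at h
    norm_num at h
    linear_combination h
  have Du1 : ∀ (q d : ℝ × ℝ), fderiv ℝ u1 q d = -4 * v q * fderiv ℝ v q d - 4 * w q * fderiv ℝ w q d := by
    intro q d
    rw [hu1fun]
    simp (disch := fun_prop) only [fda, fds, fdm, fdcm, fdp, fdconst, fdneg]
    push_cast; norm_num; ring
  have Du2 : ∀ (q d : ℝ × ℝ), fderiv ℝ (fun z : ℝ × ℝ => 4 * (v z) ^ 3 - 4 * v z * (w z) ^ 2) q d = (12 * (v q) ^ 2 - 4 * (w q) ^ 2) * fderiv ℝ v q d - 8 * v q * w q * fderiv ℝ w q d := by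
    intro q d
    simp (disch := fun_prop) only [fda, fds, fdm, fdcm, fdp, fdconst, fdneg]
    push_cast; norm_num; ring
  have Du3 : ∀ (q d : ℝ × ℝ), fderiv ℝ (fun z : ℝ × ℝ => -(((v z) ^ 2 - 5 * (w z) ^ 2) * (3 * (v z) ^ 2 + (w z) ^ 2))) q d = (-12 * (v q) ^ 3 + 28 * v q * (w q) ^ 2) * fderiv ℝ v q d + (28 * (v q) ^ 2 * w q + 20 * (w q) ^ 3) * fderiv ℝ w q d := by
    intro q d
    simp (disch := fun_prop) only [fda, fds, fdm, fdcm, fdp, fdconst, fdneg]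
    push_cast; norm_num; ring
  have Du4 : ∀ (q d : ℝ × ℝ), fderiv ℝ (fun z : ℝ × ℝ => 4 / 5 * v z * ((v z) ^ 2 - 5 * (w z) ^ 2) ^ 2) q d = (4 * (v q) ^ 4 - 24 * (v q) ^ 2 * (w q) ^ 2 + 20 * (w q) ^ 4) * fderiv ℝ v q d + (-16 * (v q) ^ 3 * w q + 80 * v q * (w q) ^ 3) * fderiv ℝ w q d := by
    intro q d
    simp (disch := fun_prop) only [fda, fds, fdm, fdcm, fdp, fdconst, fdneg]
    push_cast; norm_num; ring
  have part1 : ∀ (p : ℝ) (q : ℝ × ℝ), F p q = (1 / 5) * p ^ 5 + u1 q * p ^ 3 + (4 * (v q) ^ 3 - 4 * v q * (w q) ^ 2) * p ^ 2 + (-(((v q) ^ 2 - 5 * (w q) ^ 2) * (3 * (v q) ^ 2 + (w q) ^ 2))) * p + (4 / 5 * v q * ((v q) ^ 2 - 5 * (w q) ^ 2) ^ 2) := by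
    intro p q
    rw [hFdef, hu1, hf, hg]
    linear_combination ((1 : ℝ) / 5 * (w q) ^ 2 * ((p + 4 * v q) * (-2 * (p ^ 2 - 2 * v q * p + (v q) ^ 2) + (w q) ^ 2 * (Real.sqrt 5 ^ 2 + 5)) + 2 * p ^ 3)) * s5
  refine ⟨(fun z : ℝ × ℝ => 4 * (v z) ^ 3 - 4 * v z * (w z) ^ 2), (fun z : ℝ × ℝ => -(((v z) ^ 2 - 5 * (w z) ^ 2) * (3 * (v z) ^ 2 + (w z) ^ 2))), (fun z : ℝ × ℝ => 4 / 5 * v z * ((v z) ^ 2 - 5 * (w z) ^ 2) ^ 2), part1, ?_, ?_, ?_, ?_, ?_⟩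
  · intro p q
    have hFp : F p = fun z : ℝ × ℝ => (1 / 5) * p ^ 5 + u1 z * p ^ 3 + (4 * (v z) ^ 3 - 4 * v z * (w z) ^ 2) * p ^ 2 + (-(((v z) ^ 2 - 5 * (w z) ^ 2) * (3 * (v z) ^ 2 + (w z) ^ 2))) * p + (4 / 5 * v z * ((v z) ^ 2 - 5 * (w z) ^ 2) ^ 2) := funext fun z => part1 p z
    have hd : deriv (fun p' : ℝ => F p' q) p = p ^ 4 + 3 * u1 q * p ^ 2 + 2 * (4 * (v q) ^ 3 - 4 * v q * (w q) ^ 2) * p + (-(((v q) ^ 2 - 5 * (w q) ^ 2) * (3 * (v q) ^ 2 + (w q) ^ 2))) := by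
      have e : (fun p' : ℝ => F p' q) = fun p' : ℝ => (1 / 5) * p' ^ 5 + u1 q * p' ^ 3 + (4 * (v q) ^ 3 - 4 * v q * (w q) ^ 2) * p' ^ 2 + (-(((v q) ^ 2 - 5 * (w q) ^ 2) * (3 * (v q) ^ 2 + (w q) ^ 2))) * p' + (4 / 5 * v q * ((v q) ^ 2 - 5 * (w q) ^ 2) ^ 2) := funext fun p' => part1 p' q
      rw [e]
      have h5 := (hasDerivAt_pow 5 p).const_mul ((1 : ℝ) / 5)
      have h3 := (hasDerivAt_pow 3 p).const_mul (u1 q)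
      have h2 := (hasDerivAt_pow 2 p).const_mul (4 * (v q) ^ 3 - 4 * v q * (w q) ^ 2)
      have h1 := (hasDerivAt_id p).const_mul (-(((v q) ^ 2 - 5 * (w q) ^ 2) * (3 * (v q) ^ 2 + (w q) ^ 2)))
      have h0 := hasDerivAt_const p (4 / 5 * v q * ((v q) ^ 2 - 5 * (w q) ^ 2) ^ 2)
      have H := (((h5.fun_add h3).fun_add h2).fun_add h1).fun_add h0
      simp only [id_eq] at H
      rw [H.deriv]
      push_cast; norm_num; ring
    rw [hd, hFp]
    simp only [pt, px]
    simp (disch := fun_prop) only [fda, fds, fdm, fdcm, fdp, fdconst, fdneg]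
    simp only [Du1, hu1val]
    push_cast; norm_num
    linear_combination (p ^ 3 * (-4 * v q) + p ^ 2 * (12 * (v q) ^ 2 - 4 * (w q) ^ 2) + p * (-12 * (v q) ^ 3 + 28 * v q * (w q) ^ 2) + (4 * (v q) ^ 4 - 24 * (v q) ^ 2 * (w q) ^ 2 + 20 * (w q) ^ 4)) * S2 q + (p ^ 3 * (-4 * w q) + p ^ 2 * (-8 * v q * w q) + p * (28 * (v q) ^ 2 * w q + 20 * (w q) ^ 3) + (-16 * (v q) ^ 3 * w q + 80 * v q * (w q) ^ 3)) * S1 q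
  · intro q
    simp only [pt, px, Du1, Du2]
    linear_combination (-4 * v q) * S2 q + (-4 * w q) * S1 q
  · intro q
    simp only [pt, px, Du1, Du2, Du3, hu1val]
    linear_combination (12 * (v q) ^ 2 - 4 * (w q) ^ 2) * S2 q + (-8 * v q * w q) * S1 q
  · intro q
    simp only [pt, px, Du1, Du3, Du4]
    linear_combination (-12 * (v q) ^ 3 + 28 * v q * (w q) ^ 2) * S2 q + (28 * (v q) ^ 2 * w q + 20 * (w q) ^ 3) * S1 q
  · intro q
    simp only [pt, px, Du1, Du4]
    linear_combination (4 * (v q) ^ 4 - 24 * (v q) ^ 2 * (w q) ^ 2 + 20 * (w q) ^ 4) * S2 q + (-16 * (v q) ^ 3 * w q + 80 * v q * (w q) ^ 3) * S1 q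
end

section
/- Let f, g : ℝ² → ℝ be C¹ functions of (t,x), set u := −(3f² + 4fg + 3g²)/5, h := (f − g)/2, and q := (f + g)/2. Then the pair of equations f_t + f·f_x + u_x = 0 and g_t + g·g_x + u_x = 0 holds on ℝ² if and only if the pair of equations h_t + (hq)_x = 0 and q_t + (h²/10 − 3q²/2)_x = 0 holds on ℝ². -/
/-- With `u = −(3f² + 4fg + 3g²)/5`, `h = (f−g)/2` and
`q = (f+g)/2`, the pair of equations `fₜ + f·fₓ + uₓ = 0`, `gₜ + g·gₓ + uₓ = 0`
holds on `ℝ²` if and only if the pair `hₜ + (hq)ₓ = 0`,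
`qₜ + (h²/10 − 3q²/2)ₓ = 0` holds on `ℝ²`. -/
theorem statement11
    (f g : ℝ × ℝ → ℝ) (hf : ContDiff ℝ 1 f) (hg : ContDiff ℝ 1 g)
    (u h q : ℝ × ℝ → ℝ)
    (hu : ∀ z : ℝ × ℝ, u z = -(3 * (f z) ^ 2 + 4 * f z * g z + 3 * (g z) ^ 2) / 5)
    (hh : ∀ z : ℝ × ℝ, h z = (f z - g z) / 2)
    (hq : ∀ z : ℝ × ℝ, q z = (f z + g z) / 2) :
    ((∀ z : ℝ × ℝ, pt f z + f z * px f z + px u z = 0) ∧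
     (∀ z : ℝ × ℝ, pt g z + g z * px g z + px u z = 0))
    ↔
    ((∀ z : ℝ × ℝ, pt h z + px (fun y => h y * q y) z = 0) ∧
     (∀ z : ℝ × ℝ, pt q z + px (fun y => (h y) ^ 2 / 10 - 3 * (q y) ^ 2 / 2) z = 0)) := by
  have hu' : u = fun y => -(3 * (f y) ^ 2 + 4 * f y * g y + 3 * (g y) ^ 2) / 5 := funext hu
  have hh' : h = fun y => (f y - g y) / 2 := funext hh
  have hq' : q = fun y => (f y + g y) / 2 := funext hq
  subst hu' hh' hq'
  have df : ∀ z, DifferentiableAt ℝ f z := fun z => hf.differentiable one_ne_zero z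
  have dg : ∀ z, DifferentiableAt ℝ g z := fun z => hg.differentiable one_ne_zero z
  have Du : ∀ (v z : ℝ × ℝ),
      fderiv ℝ (fun y => -(3 * (f y) ^ 2 + 4 * f y * g y + 3 * (g y) ^ 2) / 5) z v =
        -(6 * (f z * fderiv ℝ f z v) + 4 * (g z * fderiv ℝ f z v + f z * fderiv ℝ g z v)
          + 6 * (g z * fderiv ℝ g z v)) / 5 := by
    intro v z
    have Hf := (df z).hasFDerivAt
    have Hg := (dg z).hasFDerivAt
    have e : (fun y => -(3 * (f y) ^ 2 + 4 * f y * g y + 3 * (g y) ^ 2) / 5)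
        = fun y => -(3 * (f y * f y) + 4 * (f y * g y) + 3 * (g y * g y)) * (5 : ℝ)⁻¹ := by
      funext y; ring
    rw [e]
    have H := (((((Hf.mul Hf).const_mul (3 : ℝ)).add ((Hf.mul Hg).const_mul (4 : ℝ))).add
      ((Hg.mul Hg).const_mul (3 : ℝ))).neg.mul_const ((5 : ℝ)⁻¹))
    erw [H.fderiv]; simp; ring
  have Dh : ∀ (v z : ℝ × ℝ),
      fderiv ℝ (fun y => (f y - g y) / 2) z v = (fderiv ℝ f z v - fderiv ℝ g z v) / 2 := by
    intro v z
    have e : (fun y => (f y - g y) / 2) = fun y => (f y - g y) * (2 : ℝ)⁻¹ := by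
      funext y; ring
    erw [e, (((df z).hasFDerivAt.sub (dg z).hasFDerivAt).mul_const ((2 : ℝ)⁻¹)).fderiv]
    simp; ring
  have Dq : ∀ (v z : ℝ × ℝ),
      fderiv ℝ (fun y => (f y + g y) / 2) z v = (fderiv ℝ f z v + fderiv ℝ g z v) / 2 := by
    intro v z
    have e : (fun y => (f y + g y) / 2) = fun y => (f y + g y) * (2 : ℝ)⁻¹ := by
      funext y; ring
    erw [e, (((df z).hasFDerivAt.add (dg z).hasFDerivAt).mul_const ((2 : ℝ)⁻¹)).fderiv]
    simp; ring
  have Dhq : ∀ (v z : ℝ × ℝ),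
      fderiv ℝ (fun y => (f y - g y) / 2 * ((f y + g y) / 2)) z v =
        (f z * fderiv ℝ f z v - g z * fderiv ℝ g z v) / 2 := by
    intro v z
    have Hf := (df z).hasFDerivAt
    have Hg := (dg z).hasFDerivAt
    have e : (fun y => (f y - g y) / 2 * ((f y + g y) / 2))
        = fun y => (f y * f y - g y * g y) * (4 : ℝ)⁻¹ := by
      funext y; ring
    erw [e, (((Hf.mul Hf).sub (Hg.mul Hg)).mul_const ((4 : ℝ)⁻¹)).fderiv]
    simp; ring
  have Dlast : ∀ (v z : ℝ × ℝ),
      fderiv ℝ (fun y => ((f y - g y) / 2) ^ 2 / 10 - 3 * ((f y + g y) / 2) ^ 2 / 2) z v =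
        2 * (f z * fderiv ℝ f z v) * (-7/20)
          + (g z * fderiv ℝ f z v + f z * fderiv ℝ g z v) * (-4/5)
          + 2 * (g z * fderiv ℝ g z v) * (-7/20) := by
    intro v z
    have Hf := (df z).hasFDerivAt
    have Hg := (dg z).hasFDerivAt
    have e : (fun y => ((f y - g y) / 2) ^ 2 / 10 - 3 * ((f y + g y) / 2) ^ 2 / 2)
        = fun y => (f y * f y) * (-7/20 : ℝ) + ((f y * g y) * (-4/5 : ℝ)
            + (g y * g y) * (-7/20 : ℝ)) := by
      funext y; ring
    erw [e, (((Hf.mul Hf).mul_const ((-7/20 : ℝ))).add (((Hf.mul Hg).mul_const ((-4/5 : ℝ))).add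
      ((Hg.mul Hg).mul_const ((-7/20 : ℝ))))).fderiv]
    simp; ring
  constructor
  · rintro ⟨H1, H2⟩
    constructor <;> intro z <;>
      [have h1 := H1 z; have h1 := H1 z] <;> have h2 := H2 z <;>
      simp only [pt, px, Du, Dh, Dq, Dhq, Dlast] at h1 h2 ⊢ <;>
      linarith
  · rintro ⟨H1, H2⟩
    constructor <;> intro z <;>
      [have h1 := H1 z; have h1 := H1 z] <;> have h2 := H2 z <;>
      simp only [pt, px, Du, Dh, Dq, Dhq, Dlast] at h1 h2 ⊢ <;>
      linarith
end

section
/- For (w,v) ∈ ℝ² with w ≠ 0, set R := √(4v² + w²), λ₁(w,v) := −v + R, and ξ₁ := (w, R − 2v). Then: (a) ξ₁ is an eigenvector of the matrix A(w,v) = [[v, w], [w, −3v]] with eigenvalue λ₁; (b) the directional derivative of the function λ₁ at the point (w,v) in the direction ξ₁ equals 6v(R − 2v)/R; and (c) this directional derivative is positive when v > 0, zero when v = 0, and negative when v < 0. In particular the eigenvalue λ₁ of the strictly hyperbolic system w_t + (wv)_x = 0, v_t + (w²/2 − 3v²/2)_x = 0 is not genuinely nonlinear: the sign of its nonlinearity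 ∂λ₁/∂r₁ = dλ₁(ξ₁) changes with the sign of v. -/
/-- For `w ≠ 0`, with `R = √(4v² + w²)`, `λ₁ = −v + R` and
`ξ₁ = (w, R − 2v)`: (a) `ξ₁` is an eigenvector of `A(w,v) = [[v, w], [w, −3v]]`
with eigenvalue `λ₁`; (b) the directional derivative of
`(w,v) ↦ −v + √(4v² + w²)` at `(w,v)` in the direction `ξ₁` equals
`6v(R − 2v)/R`; (c) this quantity is positive for `v > 0`, zero for `v = 0`, and
negative for `v < 0` — so the eigenvalue `λ₁` is not genuinely nonlinear: the
sign of its nonlinearity changes with the sign of `v`. -/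
theorem statement13
    (w v : ℝ) (hw : w ≠ 0)
    (R lam1 : ℝ) (xi : Fin 2 → ℝ)
    (hR : R = Real.sqrt (4 * v ^ 2 + w ^ 2))
    (hlam1 : lam1 = -v + R)
    (hxi : xi = ![w, R - 2 * v]) :
    Matrix.mulVec !![v, w; w, -3 * v] xi = lam1 • xi ∧
    fderiv ℝ (fun p : ℝ × ℝ => -p.2 + Real.sqrt (4 * p.2 ^ 2 + p.1 ^ 2)) (w, v)
      (w, R - 2 * v) = 6 * v * (R - 2 * v) / R ∧
    (0 < v → 0 < 6 * v * (R - 2 * v) / R) ∧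
    (v = 0 → 6 * v * (R - 2 * v) / R = 0) ∧
    (v < 0 → 6 * v * (R - 2 * v) / R < 0) := by
  have hpos : (0:ℝ) < 4 * v ^ 2 + w ^ 2 := by positivity
  have hR0 : 0 < R := hR ▸ Real.sqrt_pos.mpr hpos
  have hR2 : R ^ 2 = 4 * v ^ 2 + w ^ 2 := by
    rw [hR, Real.sq_sqrt hpos.le]
  have hw2 : (0:ℝ) < w ^ 2 := by positivity
  have hRv : 2 * v < R := by nlinarith [hw2, hR0, hR2]
  refine ⟨?_, ?_, ?_, ?_, ?_⟩
  · subst hxi hlam1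
    funext i
    fin_cases i <;>
      simp [Matrix.mulVec, dotProduct, Fin.sum_univ_two] <;> nlinarith
  · have h1 : HasFDerivAt (fun p : ℝ × ℝ => p.1) (ContinuousLinearMap.fst ℝ ℝ ℝ) (w, v) :=
      hasFDerivAt_fst
    have h2 : HasFDerivAt (fun p : ℝ × ℝ => p.2) (ContinuousLinearMap.snd ℝ ℝ ℝ) (w, v) :=
      hasFDerivAt_snd
    have heq : (fun p : ℝ × ℝ => 4 * p.2 ^ 2 + p.1 ^ 2)
        = fun p : ℝ × ℝ => 4 * (p.2 * p.2) + p.1 * p.1 := by funext p; ring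
    have hg := ((h2.mul h2).const_mul (4:ℝ)).add (h1.mul h1)
    change HasFDerivAt (fun p : ℝ × ℝ => 4 * (p.2 * p.2) + p.1 * p.1) _ (w, v) at hg
    rw [← heq] at hg
    have hsq := hg.sqrt (by positivity)
    have hf := h2.neg.add hsq
    change HasFDerivAt (fun p : ℝ × ℝ => -p.2 + Real.sqrt (4 * p.2 ^ 2 + p.1 ^ 2)) _ (w, v) at hf
    rw [hf.fderiv]
    simp only [ContinuousLinearMap.add_apply, ContinuousLinearMap.neg_apply,
      ContinuousLinearMap.smul_apply, ContinuousLinearMap.coe_fst',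
      ContinuousLinearMap.coe_snd', smul_eq_mul]
    rw [← hR]
    field_simp
    nlinarith [hR0, hR2]
  · intro hv
    have : 0 < 6 * v * (R - 2 * v) := by nlinarith
    positivity
  · intro hv; simp [hv]
  · intro hv
    apply div_neg_of_neg_of_pos _ hR0
    nlinarith
end
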